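/- arXiv:0911.0098 — 8 statements merged into one kernel-verified Lean document; each statement's English description precedes it below -/
import Mathlib

section
/- Let {E*_i}_{i=0}^d be a system of mutually orthogonal idempotents in End(V), and let A ∈ End(V) satisfy E*_i A E*_j = 0 if |i−j| > 1 and E*_i A E*_j ≠ 0 if |i−j| = 1 (0 ≤ i, j ≤ d). Then the (d+1)^2 elements A^r E*_0 A^s (0 ≤ r, s ≤ d) form a basis for End(V) as a K-vector space. -/
open Module Finset

section Aux

variable {K : Type*} [Field K] {V : Type*} [AddCommGroup V] [Module K V]

private lemma ro_aux (E X Y : Module.End K V)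
    (hE : Module.finrank K (LinearMap.range E) = 1)
    (hX : X ≠ 0) (hXE : X * E = X) (hY : Y ≠ 0) (hEY : E * Y = Y) : X * Y ≠ 0 := by
  obtain ⟨x, hx⟩ : ∃ x, Y x ≠ 0 := by
    by_contra h; push_neg at h; exact hY (LinearMap.ext fun x => by simp [h x])
  obtain ⟨z, hz⟩ : ∃ z, X z ≠ 0 := by
    by_contra h; push_neg at h; exact hX (LinearMap.ext fun z => by simp [h z])
  have hYx : E (Y x) = Y x := by
    simpa [Module.End.mul_apply] using LinearMap.congr_fun hEY x
  have hEz : X (E z) = X z := by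
    simpa [Module.End.mul_apply] using LinearMap.congr_fun hXE z
  have hEz0 : E z ≠ 0 := fun h => hz (by rw [← hEz, h, map_zero])
  set W := LinearMap.range E with hW
  have hw0 : (⟨E z, LinearMap.mem_range_self E z⟩ : W) ≠ 0 := by
    simp [Subtype.ext_iff, hEz0]
  obtain ⟨c, hc⟩ := (finrank_eq_one_iff_of_nonzero' (⟨E z, LinearMap.mem_range_self E z⟩ : W)
    hw0).mp hE ⟨Y x, ⟨Y x, hYx⟩⟩
  have hc' : c • E z = Y x := by
    have := congrArg (Subtype.val) hc
    simpa using this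
  have hc0 : c ≠ 0 := by
    intro h; rw [h, zero_smul] at hc'; exact hx hc'.symm
  intro hcon
  have h1 : X (Y x) = 0 := by
    have := LinearMap.congr_fun hcon x
    simpa [Module.End.mul_apply] using this
  rw [← hc', map_smul, hEz] at h1
  exact hz ((smul_eq_zero.mp h1).resolve_left hc0)

end Aux

set_option maxHeartbeats 1000000 in
/-- Let `{E*_i}_{i=0}^d` be a system of mutually orthogonal idempotents in `End(V)`, and
let `A ∈ End(V)` satisfy `E*_i A E*_j = 0` if `|i−j| > 1` and `E*_i A E*_j ≠ 0` if
`|i−j| = 1`. Then the `(d+1)^2` elements `A^r E*_0 A^s` (`0 ≤ r, s ≤ d`) form a basis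
for `End(V)` as a `K`-vector space. -/
theorem stmt_6 {K : Type*} [Field K] {d : ℕ}
    {V : Type*} [AddCommGroup V] [Module K V] [FiniteDimensional K V]
    (hdim : Module.finrank K V = d + 1)
    (Estar : Fin (d + 1) → Module.End K V)
    (hEstar : ∀ i j, Estar i * Estar j = if i = j then Estar i else 0)
    (hEstarRank : ∀ i, Module.finrank K (LinearMap.range (Estar i)) = 1)
    (A : Module.End K V)
    (htri : ∀ i j : Fin (d + 1), 1 < Nat.dist (i : ℕ) (j : ℕ) → Estar i * A * Estar j = 0)
    (hirr : ∀ i j : Fin (d + 1), Nat.dist (i : ℕ) (j : ℕ) = 1 → Estar i * A * Estar j ≠ 0) :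
    LinearIndependent K
        (fun rs : Fin (d + 1) × Fin (d + 1) =>
          A ^ (rs.1 : ℕ) * Estar 0 * A ^ (rs.2 : ℕ)) ∧
      Submodule.span K
          (Set.range fun rs : Fin (d + 1) × Fin (d + 1) =>
            A ^ (rs.1 : ℕ) * Estar 0 * A ^ (rs.2 : ℕ)) = ⊤ := by
  have hidem : ∀ i, Estar i * Estar i = Estar i := fun i => by simpa using hEstar i i
  have hne : ∀ i, Estar i ≠ 0 := by
    intro i h
    have hr := hEstarRank i
    rw [h, LinearMap.range_zero] at hr
    simp at hr
  -- choose nonzero fixed vectors for each idempotent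
  have hexv : ∀ i, ∃ w : V, Estar i w = w ∧ w ≠ 0 := by
    intro i
    obtain ⟨x, hx⟩ : ∃ x, Estar i x ≠ 0 := by
      by_contra h; push_neg at h; exact hne i (LinearMap.ext fun x => by simp [h x])
    refine ⟨Estar i x, ?_, hx⟩
    simpa [Module.End.mul_apply] using LinearMap.congr_fun (hidem i) x
  choose v hv hvne using hexv
  have hvj : ∀ i j, Estar j (v i) = if j = i then v i else 0 := by
    intro i j
    have h2 : Estar j (Estar i (v i)) = (if j = i then Estar j else 0) (v i) := by
      simpa [Module.End.mul_apply] using LinearMap.congr_fun (hEstar j i) (v i)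
    rw [hv i] at h2
    rw [h2]
    split_ifs with h
    · subst h; exact hv j
    · rfl
  have hliv : LinearIndependent K v := by
    rw [Fintype.linearIndependent_iff]
    intro c hc j
    have h3 := congrArg (Estar j) hc
    rw [map_sum, map_zero] at h3
    simp only [map_smul, hvj, smul_ite, smul_zero] at h3
    rw [Finset.sum_ite_eq] at h3
    simp only [Finset.mem_univ, if_true] at h3
    rcases smul_eq_zero.mp h3 with h | h
    · exact h
    · exact absurd h (hvne j)
  have hspanv : Submodule.span K (Set.range v) = ⊤ :=
    hliv.span_eq_top_of_card_eq_finrank (by simp [hdim])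
  have hsum : (∑ j, Estar j) = (1 : Module.End K V) := by
    apply LinearMap.ext_on hspanv
    rintro x ⟨i, rfl⟩
    rw [LinearMap.sum_apply]
    simp [hvj, Finset.sum_ite_eq', Finset.sum_ite_eq]
  -- left vanishing
  have hvanL : ∀ (r : ℕ) (i : Fin (d + 1)), r < (i : ℕ) → Estar i * A ^ r * Estar 0 = 0 := by
    intro r
    induction r with
    | zero =>
      intro i hi
      rw [pow_zero, mul_one, hEstar, if_neg]
      intro h
      rw [h] at hi
      simp at hi
    | succ r ih =>
      intro i hi
      have key : Estar i * A ^ (r + 1) * Estar 0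
          = ∑ j, (Estar i * A) * (Estar j * (A ^ r * Estar 0)) := by
        have h1 : Estar i * A ^ (r + 1) * Estar 0
            = (Estar i * A) * ((1 : Module.End K V) * (A ^ r * Estar 0)) := by
          rw [pow_succ']; noncomm_ring
        rw [h1, ← hsum, Finset.sum_mul, Finset.mul_sum]
      rw [key]
      apply Finset.sum_eq_zero
      intro j _
      rcases le_or_gt (Nat.dist (i : ℕ) (j : ℕ)) 1 with h | h
      · have hrj : r < (j : ℕ) := by
          have hd : (i : ℕ) - j + ((j : ℕ) - i) ≤ 1 := by simpa [Nat.dist] using h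
          omega
        have h2 : Estar j * (A ^ r * Estar 0) = 0 := by
          have e1 : Estar j * (A ^ r * Estar 0) = (Estar j * Estar j) * (A ^ r * Estar 0) := by
            rw [hidem]
          have e2 : (Estar j * Estar j) * (A ^ r * Estar 0)
              = Estar j * (Estar j * A ^ r * Estar 0) := by noncomm_ring
          rw [e1, e2, ih j hrj, mul_zero]
        rw [h2, mul_zero]
      · have h3 : (Estar i * A) * (Estar j * (A ^ r * Estar 0))
            = (Estar i * A * Estar j) * (A ^ r * Estar 0) := by noncomm_ring
        rw [h3, htri i j h, zero_mul]
  -- right vanishing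
  have hvanR : ∀ (s : ℕ) (j : Fin (d + 1)), s < (j : ℕ) → Estar 0 * A ^ s * Estar j = 0 := by
    intro s
    induction s with
    | zero =>
      intro j hj
      rw [pow_zero, mul_one, hEstar, if_neg]
      intro h
      rw [← h] at hj
      simp at hj
    | succ s ih =>
      intro j hj
      have key : Estar 0 * A ^ (s + 1) * Estar j
          = ∑ k, ((Estar 0 * A ^ s) * Estar k) * (A * Estar j) := by
        have h1 : Estar 0 * A ^ (s + 1) * Estar j
            = ((Estar 0 * A ^ s) * (1 : Module.End K V)) * (A * Estar j) := by
          rw [pow_succ]; noncomm_ring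
        rw [h1, ← hsum, Finset.mul_sum, Finset.sum_mul]
      rw [key]
      apply Finset.sum_eq_zero
      intro k _
      rcases le_or_gt (Nat.dist (k : ℕ) (j : ℕ)) 1 with h | h
      · have hsk : s < (k : ℕ) := by
          have hd : (k : ℕ) - j + ((j : ℕ) - k) ≤ 1 := by simpa [Nat.dist] using h
          omega
        have h2 : (Estar 0 * A ^ s) * Estar k = 0 := ih k hsk
        rw [h2, zero_mul]
      · have e1 : ((Estar 0 * A ^ s) * Estar k) * (A * Estar j)
            = ((Estar 0 * A ^ s) * (Estar k * Estar k)) * (A * Estar j) := by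
          rw [hidem]
        have e2 : ((Estar 0 * A ^ s) * (Estar k * Estar k)) * (A * Estar j)
            = (Estar 0 * A ^ s * Estar k) * (Estar k * A * Estar j) := by noncomm_ring
        rw [e1, e2, htri k j h, mul_zero]
  -- left diagonal nonvanishing
  have hdiagL : ∀ n : ℕ, ∀ hn : n ≤ d,
      Estar ⟨n, by omega⟩ * A ^ n * Estar 0 ≠ 0 := by
    intro n
    induction n with
    | zero =>
      intro _
      have h0 : (⟨0, by omega⟩ : Fin (d + 1)) = 0 := rfl
      rw [h0, pow_zero, mul_one, hEstar, if_pos rfl]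
      exact hne 0
    | succ n ih =>
      intro hn
      have hn' : n ≤ d := by omega
      set i1 : Fin (d + 1) := ⟨n + 1, by omega⟩ with hi1
      set i0 : Fin (d + 1) := ⟨n, by omega⟩ with hi0
      have key : Estar i1 * A ^ (n + 1) * Estar 0
          = ∑ j, (Estar i1 * A) * (Estar j * (A ^ n * Estar 0)) := by
        have h1 : Estar i1 * A ^ (n + 1) * Estar 0
            = (Estar i1 * A) * ((1 : Module.End K V) * (A ^ n * Estar 0)) := by
          rw [pow_succ']; noncomm_ring
        rw [h1, ← hsum, Finset.sum_mul, Finset.mul_sum]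
      rw [key, Finset.sum_eq_single i0]
      · have e1 : (Estar i1 * A) * (Estar i0 * (A ^ n * Estar 0))
            = (Estar i1 * A) * ((Estar i0 * Estar i0) * (A ^ n * Estar 0)) := by
          rw [hidem]
        have e2 : (Estar i1 * A) * ((Estar i0 * Estar i0) * (A ^ n * Estar 0))
            = (Estar i1 * A * Estar i0) * (Estar i0 * A ^ n * Estar 0) := by noncomm_ring
        rw [e1, e2]
        refine ro_aux (Estar i0) _ _ (hEstarRank i0) ?_ ?_ (ih hn') ?_
        · refine hirr i1 i0 ?_
          simp [hi1, hi0, Nat.dist]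
        · rw [mul_assoc, hidem]
        · rw [← mul_assoc, ← mul_assoc, hidem]
      · intro j _ hj
        by_cases h : n < (j : ℕ)
        · have h2 : Estar j * (A ^ n * Estar 0) = 0 := by
            have e1 : Estar j * (A ^ n * Estar 0) = (Estar j * Estar j) * (A ^ n * Estar 0) := by
              rw [hidem]
            have e2 : (Estar j * Estar j) * (A ^ n * Estar 0)
                = Estar j * (Estar j * A ^ n * Estar 0) := by noncomm_ring
            rw [e1, e2, hvanL n j h, mul_zero]
          rw [h2, mul_zero]
        · have hjn : (j : ℕ) < n := by
            rcases lt_or_eq_of_le (not_lt.mp h) with h' | h'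
            · exact h'
            · exact absurd (Fin.ext h' : j = i0) hj
          have h3 : (Estar i1 * A) * (Estar j * (A ^ n * Estar 0))
              = (Estar i1 * A * Estar j) * (A ^ n * Estar 0) := by noncomm_ring
          have h4 : 1 < Nat.dist (i1 : ℕ) (j : ℕ) := by
            simp only [hi1, Nat.dist]
            omega
          rw [h3, htri i1 j h4, zero_mul]
      · intro h
        exact absurd (Finset.mem_univ i0) h
  -- right diagonal nonvanishing
  have hdiagR : ∀ n : ℕ, ∀ hn : n ≤ d,
      Estar 0 * A ^ n * Estar ⟨n, by omega⟩ ≠ 0 := by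
    intro n
    induction n with
    | zero =>
      intro _
      have h0 : (⟨0, by omega⟩ : Fin (d + 1)) = 0 := rfl
      rw [h0, pow_zero, mul_one, hEstar, if_pos rfl]
      exact hne 0
    | succ n ih =>
      intro hn
      have hn' : n ≤ d := by omega
      set i1 : Fin (d + 1) := ⟨n + 1, by omega⟩ with hi1
      set i0 : Fin (d + 1) := ⟨n, by omega⟩ with hi0
      have key : Estar 0 * A ^ (n + 1) * Estar i1
          = ∑ k, ((Estar 0 * A ^ n) * Estar k) * (A * Estar i1) := by
        have h1 : Estar 0 * A ^ (n + 1) * Estar i1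
            = ((Estar 0 * A ^ n) * (1 : Module.End K V)) * (A * Estar i1) := by
          rw [pow_succ]; noncomm_ring
        rw [h1, ← hsum, Finset.mul_sum, Finset.sum_mul]
      rw [key, Finset.sum_eq_single i0]
      · have e1 : ((Estar 0 * A ^ n) * Estar i0) * (A * Estar i1)
            = ((Estar 0 * A ^ n) * (Estar i0 * Estar i0)) * (A * Estar i1) := by
          rw [hidem]
        have e2 : ((Estar 0 * A ^ n) * (Estar i0 * Estar i0)) * (A * Estar i1)
            = (Estar 0 * A ^ n * Estar i0) * (Estar i0 * A * Estar i1) := by noncomm_ring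
        rw [e1, e2]
        refine ro_aux (Estar i0) _ _ (hEstarRank i0) (ih hn') ?_ ?_ ?_
        · rw [mul_assoc, hidem]
        · refine hirr i0 i1 ?_
          simp [hi1, hi0, Nat.dist]
        · rw [← mul_assoc, ← mul_assoc, hidem]
      · intro k _ hk
        by_cases h : n < (k : ℕ)
        · rw [hvanR n k h, zero_mul]
        · have hkn : (k : ℕ) < n := by
            rcases lt_or_eq_of_le (not_lt.mp h) with h' | h'
            · exact h'
            · exact absurd (Fin.ext h' : k = i0) hk
          have e1 : ((Estar 0 * A ^ n) * Estar k) * (A * Estar i1)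
              = ((Estar 0 * A ^ n) * (Estar k * Estar k)) * (A * Estar i1) := by
            rw [hidem]
          have e2 : ((Estar 0 * A ^ n) * (Estar k * Estar k)) * (A * Estar i1)
              = (Estar 0 * A ^ n * Estar k) * (Estar k * A * Estar i1) := by noncomm_ring
          have h4 : 1 < Nat.dist (k : ℕ) (i1 : ℕ) := by
            simp only [hi1, Nat.dist]
            omega
          rw [e1, e2, htri k i1 h4, mul_zero]
      · intro h
        exact absurd (Finset.mem_univ i0) h
  -- the key split identity
  have hsplit : ∀ (m n : Fin (d + 1)) (p : Fin (d + 1) × Fin (d + 1)),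
      Estar m * (A ^ (p.1 : ℕ) * Estar 0 * A ^ (p.2 : ℕ)) * Estar n
        = (Estar m * A ^ (p.1 : ℕ) * Estar 0) * (Estar 0 * A ^ (p.2 : ℕ) * Estar n) := by
    intro m n p
    have e1 : Estar m * (A ^ (p.1 : ℕ) * Estar 0 * A ^ (p.2 : ℕ)) * Estar n
        = Estar m * (A ^ (p.1 : ℕ) * (Estar 0 * Estar 0) * A ^ (p.2 : ℕ)) * Estar n := by
      rw [hidem]
    have e2 : Estar m * (A ^ (p.1 : ℕ) * (Estar 0 * Estar 0) * A ^ (p.2 : ℕ)) * Estar n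
        = (Estar m * A ^ (p.1 : ℕ) * Estar 0) * (Estar 0 * A ^ (p.2 : ℕ) * Estar n) := by
      noncomm_ring
    rw [e1, e2]
  have hdiagL' : ∀ m : Fin (d + 1), Estar m * A ^ (m : ℕ) * Estar 0 ≠ 0 := by
    intro m
    have := hdiagL (m : ℕ) (Nat.lt_succ_iff.mp m.isLt)
    simpa using this
  have hdiagR' : ∀ n : Fin (d + 1), Estar 0 * A ^ (n : ℕ) * Estar n ≠ 0 := by
    intro n
    have := hdiagR (n : ℕ) (Nat.lt_succ_iff.mp n.isLt)
    simpa using this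
  have ro : ∀ X Y : Module.End K V, X ≠ 0 → X * Estar 0 = X → Y ≠ 0 → Estar 0 * Y = Y →
      X * Y ≠ 0 := fun X Y hX hXE hY hEY => ro_aux (Estar 0) X Y (hEstarRank 0) hX hXE hY hEY
  -- linear independence
  have hLI : LinearIndependent K
      (fun rs : Fin (d + 1) × Fin (d + 1) =>
        A ^ (rs.1 : ℕ) * Estar 0 * A ^ (rs.2 : ℕ)) := by
    classical
    rw [Fintype.linearIndependent_iff]
    intro c hc
    by_contra hcon
    push_neg at hcon
    obtain ⟨p0, hp0⟩ := hcon
    set s : Finset (Fin (d + 1) × Fin (d + 1)) := Finset.univ.filter (fun p => c p ≠ 0) with hs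
    have hp0s : p0 ∈ s := by simp [hs, hp0]
    obtain ⟨p1, hp1s, hp1max⟩ := s.exists_max_image Prod.fst ⟨p0, hp0s⟩
    obtain ⟨p2, hp2s, hp2max⟩ := (s.filter (fun p => p.1 = p1.1)).exists_max_image Prod.snd
        ⟨p1, Finset.mem_filter.mpr ⟨hp1s, rfl⟩⟩
    obtain ⟨hp2s', hp2fst⟩ := Finset.mem_filter.mp hp2s
    have hcmn : c p2 ≠ 0 := (Finset.mem_filter.mp hp2s').2
    have hmaxr : ∀ p ∈ s, (p.1 : ℕ) ≤ (p2.1 : ℕ) := by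
      intro p hp
      have := hp1max p hp
      rw [← hp2fst] at this
      exact Fin.le_iff_val_le_val.mp this
    have hmaxs : ∀ p ∈ s, p.1 = p2.1 → (p.2 : ℕ) ≤ (p2.2 : ℕ) := by
      intro p hp hpm
      have : p ∈ s.filter (fun q => q.1 = p1.1) :=
        Finset.mem_filter.mpr ⟨hp, by rw [hpm, hp2fst]⟩
      exact Fin.le_iff_val_le_val.mp (hp2max p this)
    have hczero : ∀ p : Fin (d + 1) × Fin (d + 1),
        ((p2.1 : ℕ) < (p.1 : ℕ) ∨ (p.1 = p2.1 ∧ (p2.2 : ℕ) < (p.2 : ℕ))) → c p = 0 := by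
      intro p hp
      by_contra hcp
      have hps : p ∈ s := by simp [hs, hcp]
      rcases hp with h | ⟨h1, h2⟩
      · exact absurd (hmaxr p hps) (by omega)
      · exact absurd (hmaxs p hps h1) (by omega)
    have h0 : Estar p2.1 * (∑ p : Fin (d + 1) × Fin (d + 1),
        c p • (A ^ (p.1 : ℕ) * Estar 0 * A ^ (p.2 : ℕ))) * Estar p2.2 = 0 := by
      rw [hc, mul_zero, zero_mul]
    rw [Finset.mul_sum, Finset.sum_mul] at h0
    simp only [mul_smul_comm, smul_mul_assoc] at h0
    rw [Finset.sum_eq_single p2] at h0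
    · rw [hsplit p2.1 p2.2 p2] at h0
      have hprod : (Estar p2.1 * A ^ (p2.1 : ℕ) * Estar 0)
          * (Estar 0 * A ^ (p2.2 : ℕ) * Estar p2.2) ≠ 0 := by
        refine ro _ _ (hdiagL' p2.1) ?_ (hdiagR' p2.2) ?_
        · rw [mul_assoc, hidem]
        · rw [← mul_assoc, ← mul_assoc, hidem]
      rcases smul_eq_zero.mp h0 with h | h
      · exact hcmn h
      · exact hprod h
    · intro p _ hpne
      rcases lt_trichotomy ((p.1 : ℕ)) ((p2.1 : ℕ)) with h | h | h
      · rw [hsplit p2.1 p2.2 p, hvanL _ _ h, zero_mul, smul_zero]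
      · have hpm : p.1 = p2.1 := Fin.ext h
        rcases lt_trichotomy ((p.2 : ℕ)) ((p2.2 : ℕ)) with h' | h' | h'
        · rw [hsplit p2.1 p2.2 p, hvanR _ _ h', mul_zero, smul_zero]
        · exact absurd (Prod.ext hpm (Fin.ext h')) hpne
        · rw [hczero p (Or.inr ⟨hpm, h'⟩), zero_smul]
      · rw [hczero p (Or.inl h), zero_smul]
    · intro h
      exact absurd (Finset.mem_univ p2) h
  refine ⟨hLI, ?_⟩
  refine hLI.span_eq_top_of_card_eq_finrank ?_
  rw [Module.finrank_linearMap K K V V, hdim]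
  simp
end

section
/- Let {E*_i}_{i=0}^d be a system of mutually orthogonal idempotents in End(V), and let A ∈ End(V) satisfy E*_i A E*_j = 0 if |i−j| > 1 and E*_i A E*_j ≠ 0 if |i−j| = 1 (0 ≤ i, j ≤ d). Then A and E*_0 together generate End(V) as a K-algebra. -/
open Module LinearMap

section Aux

variable {K : Type*} [Field K] {V : Type*} [AddCommGroup V] [Module K V]

lemma exists_span_of_rank_one (E : Module.End K V)
    (h : Module.finrank K (LinearMap.range E) = 1) :
    ∃ w : V, w ≠ 0 ∧ ∀ y ∈ LinearMap.range E, ∃ c : K, y = c • w := by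
  obtain ⟨v, hv0, hv⟩ := finrank_eq_one_iff'.mp h
  refine ⟨(v : V), by simpa using hv0, ?_⟩
  intro y hy
  obtain ⟨c, hc⟩ := hv ⟨y, hy⟩
  refine ⟨c, ?_⟩
  have := congrArg Subtype.val hc
  simpa using this.symm

lemma corner_key (E F M N : Module.End K V)
    (hrE : Module.finrank K (LinearMap.range E) = 1)
    (hrF : Module.finrank K (LinearMap.range F) = 1)
    (hMne : E * M * F ≠ 0) :
    ∃ c : K, E * N * F = c • (E * M * F) := by
  obtain ⟨u, hu0, hu⟩ := exists_span_of_rank_one E hrE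
  obtain ⟨w, hw0, hw⟩ := exists_span_of_rank_one F hrF
  obtain ⟨μM, hμM⟩ := hu (E (M w)) (LinearMap.mem_range_self _ _)
  obtain ⟨μN, hμN⟩ := hu (E (N w)) (LinearMap.mem_range_self _ _)
  have key : ∀ (L : Module.End K V) (μ : K), E (L w) = μ • u →
      ∀ x : V, ∀ c : K, F x = c • w → (E * L * F) x = (c * μ) • u := by
    intro L μ hμ x c hc
    rw [Module.End.mul_apply, Module.End.mul_apply, hc, map_smul, map_smul, hμ, smul_smul]
  have hμM0 : μM ≠ 0 := by
    intro h0
    apply hMne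
    ext x
    obtain ⟨c, hc⟩ := hw (F x) (LinearMap.mem_range_self _ _)
    rw [key M μM hμM x c hc, h0, mul_zero, zero_smul, LinearMap.zero_apply]
  refine ⟨μN * μM⁻¹, ?_⟩
  ext x
  obtain ⟨c, hc⟩ := hw (F x) (LinearMap.mem_range_self _ _)
  rw [LinearMap.smul_apply, key M μM hμM x c hc, key N μN hμN x c hc, smul_smul]
  congr 1
  field_simp

lemma comp_ne_zero (E P Q : Module.End K V)
    (hrE : Module.finrank K (LinearMap.range E) = 1)
    (hP : P * E = P) (hQ : E * Q = Q) (hPne : P ≠ 0) (hQne : Q ≠ 0) :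
    P * Q ≠ 0 := by
  obtain ⟨w, hw0, hw⟩ := exists_span_of_rank_one E hrE
  have hPw : P w ≠ 0 := by
    obtain ⟨x, hx⟩ : ∃ x, P x ≠ 0 := by
      by_contra h
      push_neg at h
      exact hPne (LinearMap.ext h)
    obtain ⟨c, hc⟩ := hw (E x) (LinearMap.mem_range_self _ _)
    have hx' : P x = c • P w := by
      conv_lhs => rw [← hP]
      rw [Module.End.mul_apply, hc, map_smul]
    intro h0
    rw [h0, smul_zero] at hx'
    exact hx hx'
  obtain ⟨y, hy⟩ : ∃ y, Q y ≠ 0 := by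
    by_contra h
    push_neg at h
    exact hQne (LinearMap.ext h)
  have hmem : Q y ∈ LinearMap.range E := by
    refine ⟨Q y, ?_⟩
    have := congrFun (congrArg DFunLike.coe hQ) y
    simpa [Module.End.mul_apply] using this
  obtain ⟨c, hc⟩ := hw (Q y) hmem
  have hc0 : c ≠ 0 := by
    rintro rfl
    rw [zero_smul] at hc
    exact hy hc
  intro h0
  have : (P * Q) y = c • P w := by rw [Module.End.mul_apply, hc, map_smul]
  rw [h0, LinearMap.zero_apply] at this
  exact hPw (by simpa [smul_eq_zero, hc0] using this.symm)

end Aux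

/-- Let `{E*_i}_{i=0}^d` be a system of mutually orthogonal idempotents in `End(V)`, and
let `A ∈ End(V)` satisfy `E*_i A E*_j = 0` if `|i−j| > 1` and `E*_i A E*_j ≠ 0` if
`|i−j| = 1`. Then `A` and `E*_0` together generate `End(V)` as a `K`-algebra. -/
theorem stmt_7 {K : Type*} [Field K] {d : ℕ}
    {V : Type*} [AddCommGroup V] [Module K V] [FiniteDimensional K V]
    (hdim : Module.finrank K V = d + 1)
    (Estar : Fin (d + 1) → Module.End K V)
    (hEstar : ∀ i j, Estar i * Estar j = if i = j then Estar i else 0)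
    (hEstarRank : ∀ i, Module.finrank K (LinearMap.range (Estar i)) = 1)
    (A : Module.End K V)
    (htri : ∀ i j : Fin (d + 1), 1 < Nat.dist (i : ℕ) (j : ℕ) → Estar i * A * Estar j = 0)
    (hirr : ∀ i j : Fin (d + 1), Nat.dist (i : ℕ) (j : ℕ) = 1 → Estar i * A * Estar j ≠ 0) :
    Algebra.adjoin K {A, Estar 0} = ⊤ := by
  have hidem : ∀ i, Estar i * Estar i = Estar i := fun i => by simpa using hEstar i i
  have horth : ∀ i j, i ≠ j → Estar i * Estar j = 0 := fun i j h => by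
    simpa [h] using hEstar i j
  have hne : ∀ i, Estar i ≠ 0 := by
    intro i h
    have := hEstarRank i
    rw [h, LinearMap.range_zero, finrank_bot] at this
    exact zero_ne_one this
  -- sum of idempotents is one
  set Ψ : V →ₗ[K] ((i : Fin (d + 1)) → LinearMap.range (Estar i)) :=
    LinearMap.pi (fun i => (Estar i).codRestrict (LinearMap.range (Estar i))
      (fun v => LinearMap.mem_range_self _ v)) with hΨ
  have hΨapp : ∀ (v : V) (i : Fin (d + 1)), ((Ψ v i : V)) = Estar i v := fun v i => rfl
  have hΨsurj : Function.Surjective Ψ := by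
    intro f
    refine ⟨∑ j, (f j : V), ?_⟩
    funext i
    apply Subtype.ext
    rw [hΨapp, map_sum]
    rw [Finset.sum_eq_single i]
    · obtain ⟨y, hy⟩ := (f i).2
      rw [← hy]
      have := congrFun (congrArg DFunLike.coe (hidem i)) y
      simpa [Module.End.mul_apply] using this
    · intro j _ hj
      obtain ⟨y, hy⟩ := (f j).2
      rw [← hy]
      have := congrFun (congrArg DFunLike.coe (horth i j (Ne.symm hj))) y
      simpa [Module.End.mul_apply] using this
    · simp
  have hfr : Module.finrank K V
      = Module.finrank K ((i : Fin (d + 1)) → LinearMap.range (Estar i)) := by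
    rw [Module.finrank_pi_fintype]
    simp [hEstarRank, hdim]
  have hΨinj : Function.Injective Ψ :=
    (LinearMap.injective_iff_surjective_of_finrank_eq_finrank hfr).mpr hΨsurj
  have hsum : (∑ i, Estar i) = (1 : Module.End K V) := by
    apply LinearMap.ext
    intro v
    apply hΨinj
    funext i
    apply Subtype.ext
    rw [hΨapp, hΨapp, Module.End.one_apply, LinearMap.sum_apply]
    rw [map_sum, Finset.sum_eq_single i]
    · have := congrFun (congrArg DFunLike.coe (hidem i)) v
      simpa [Module.End.mul_apply] using this
    · intro j _ hj
      have := congrFun (congrArg DFunLike.coe (horth i j (Ne.symm hj))) v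
      simpa [Module.End.mul_apply] using this
    · simp
  -- expansion of products through the resolution of identity
  have expand : ∀ B C : Module.End K V, B * C = ∑ k, B * Estar k * C := by
    intro B C
    calc B * C = B * (∑ k, Estar k) * C := by rw [hsum, mul_one]
    _ = ∑ k, B * Estar k * C := by rw [Finset.mul_sum, Finset.sum_mul]
  have hdist : ∀ a b : ℕ, Nat.dist a b = a - b + (b - a) := fun a b => rfl
  -- vanishing of far corners of powers
  have L1 : ∀ n : ℕ, ∀ i j : Fin (d + 1), n < Nat.dist (i : ℕ) (j : ℕ) →
      Estar i * A ^ n * Estar j = 0 := by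
    intro n
    induction n with
    | zero =>
      intro i j h
      have hij : i ≠ j := by
        intro hh
        rw [hh, Nat.dist_self] at h
        omega
      simpa [pow_zero, mul_one] using horth i j hij
    | succ n ih =>
      intro i j h
      have e1 : Estar i * A ^ (n + 1) * Estar j = (Estar i * A) * (A ^ n * Estar j) := by
        rw [pow_succ']
        noncomm_ring
      rw [e1, expand]
      apply Finset.sum_eq_zero
      intro k _
      rcases le_or_gt (Nat.dist (i : ℕ) (k : ℕ)) 1 with hk | hk
      · have hkj : n < Nat.dist (k : ℕ) (j : ℕ) := by
          have h3 := Nat.dist.triangle_inequality (i : ℕ) (k : ℕ) (j : ℕ)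
          omega
        have h0 : Estar k * (A ^ n * Estar j) = 0 := by
          rw [← mul_assoc]
          exact ih k j hkj
        rw [mul_assoc, h0, mul_zero]
      · have h0 : (Estar i * A) * Estar k = 0 := htri i k hk
        rw [h0, zero_mul]
  -- nonvanishing of adjacent corners of powers
  have L2 : ∀ n : ℕ, ∀ i j : Fin (d + 1), Nat.dist (i : ℕ) (j : ℕ) = n →
      Estar i * A ^ n * Estar j ≠ 0 := by
    intro n
    induction n with
    | zero =>
      intro i j h
      have hij : i = j := Fin.ext (Nat.eq_of_dist_eq_zero h)
      subst hij
      simpa [pow_zero, mul_one, hidem i] using hne i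
    | succ n ih =>
      intro i j h
      rw [hdist] at h
      have hcase : (j : ℕ) = (i : ℕ) + (n + 1) ∨ (i : ℕ) = (j : ℕ) + (n + 1) := by omega
      have hk0 : ∃ k0 : Fin (d + 1), Nat.dist (i : ℕ) (k0 : ℕ) = 1 ∧
          Nat.dist (k0 : ℕ) (j : ℕ) = n ∧
          ∀ k : Fin (d + 1), k ≠ k0 → Nat.dist (i : ℕ) (k : ℕ) ≤ 1 →
            n < Nat.dist (k : ℕ) (j : ℕ) := by
        rcases hcase with hc | hc
        · refine ⟨⟨(i : ℕ) + 1, by omega⟩, by simp only [hdist, Fin.val_mk]; omega,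
            by simp only [hdist, Fin.val_mk]; omega, ?_⟩
          intro k hk hk1
          have hkv : (k : ℕ) ≠ (i : ℕ) + 1 := by
            intro hh
            exact hk (Fin.ext (by simp only [Fin.val_mk]; exact hh))
          rw [hdist] at hk1 ⊢
          omega
        · refine ⟨⟨(i : ℕ) - 1, by omega⟩, by simp only [hdist, Fin.val_mk]; omega,
            by simp only [hdist, Fin.val_mk]; omega, ?_⟩
          intro k hk hk1
          have hkv : (k : ℕ) ≠ (i : ℕ) - 1 := by
            intro hh
            exact hk (Fin.ext (by simp only [Fin.val_mk]; exact hh))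
          rw [hdist] at hk1 ⊢
          omega
      obtain ⟨k0, hik0, hk0j, hfar⟩ := hk0
      have e1 : Estar i * A ^ (n + 1) * Estar j = (Estar i * A) * (A ^ n * Estar j) := by
        rw [pow_succ']
        noncomm_ring
      have e2 : Estar i * A ^ (n + 1) * Estar j
          = (Estar i * A) * Estar k0 * (A ^ n * Estar j) := by
        rw [e1, expand]
        apply Finset.sum_eq_single_of_mem k0 (Finset.mem_univ _)
        intro k _ hk
        rcases le_or_gt (Nat.dist (i : ℕ) (k : ℕ)) 1 with hk1 | hk1
        · have h0 : Estar k * (A ^ n * Estar j) = 0 := by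
            rw [← mul_assoc]
            exact L1 n k j (hfar k hk hk1)
          rw [mul_assoc, h0, mul_zero]
        · rw [htri i k hk1, zero_mul]
      have e3' : (Estar i * A * Estar k0) * (Estar k0 * (A ^ n * Estar j))
          = Estar i * A * Estar k0 * (A ^ n * Estar j) := by
        calc (Estar i * A * Estar k0) * (Estar k0 * (A ^ n * Estar j))
            = Estar i * A * (Estar k0 * Estar k0) * (A ^ n * Estar j) := by noncomm_ring
        _ = Estar i * A * Estar k0 * (A ^ n * Estar j) := by rw [hidem k0]
      have e3 : Estar i * A ^ (n + 1) * Estar j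
          = (Estar i * A * Estar k0) * (Estar k0 * (A ^ n * Estar j)) := by
        rw [e2, ← e3']
      rw [e3]
      apply comp_ne_zero (Estar k0) _ _ (hEstarRank k0)
      · rw [mul_assoc, hidem k0]
      · rw [← mul_assoc, ← mul_assoc, hidem k0, mul_assoc]
      · exact hirr i k0 hik0
      · have := ih k0 j hk0j
        rw [mul_assoc] at this
        exact this
  set T := Algebra.adjoin K {A, Estar 0} with hT
  have hAT : A ∈ T := Algebra.subset_adjoin (Set.mem_insert _ _)
  have hE0T : Estar 0 ∈ T := Algebra.subset_adjoin (Set.mem_insert_of_mem _ rfl)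
  -- one-sided collapses
  have lcollapse : ∀ (C : Module.End K V) (S : Finset (Fin (d + 1))) (k0 : Fin (d + 1)),
      k0 ∈ S → (∀ k ∈ S, k ≠ k0 → Estar k * C = 0) →
      (∑ k ∈ S, Estar k) * C = Estar k0 * C := by
    intro C S k0 hk0 h
    rw [Finset.sum_mul]
    exact Finset.sum_eq_single_of_mem k0 hk0 (fun k hk hkn => h k hk hkn)
  have rcollapse : ∀ (C : Module.End K V) (S : Finset (Fin (d + 1))) (k0 : Fin (d + 1)),
      k0 ∈ S → (∀ k ∈ S, k ≠ k0 → C * Estar k = 0) →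
      C * (∑ k ∈ S, Estar k) = C * Estar k0 := by
    intro C S k0 hk0 h
    rw [Finset.mul_sum]
    exact Finset.sum_eq_single_of_mem k0 hk0 (fun k hk hkn => h k hk hkn)
  -- each idempotent lies in the adjoined algebra
  have EinT : ∀ n : ℕ, ∀ hn : n < d + 1, Estar ⟨n, hn⟩ ∈ T := by
    intro n
    induction n using Nat.strong_induction_on with
    | _ n ihs =>
      cases n with
      | zero =>
        intro hn
        have h0 : (⟨0, hn⟩ : Fin (d + 1)) = 0 := by
          ext
          simp
        rw [h0]
        exact hE0T
      | succ m =>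
        intro hn
        have hm : m < d + 1 := by omega
        set i : Fin (d + 1) := ⟨m, hm⟩ with hi
        set i' : Fin (d + 1) := ⟨m + 1, hn⟩ with hi'
        have hiv : (i : ℕ) = m := rfl
        have hi'v : (i' : ℕ) = m + 1 := rfl
        have hiT : Estar i ∈ T := ihs m (by omega) hm
        set S : Finset (Fin (d + 1)) := Finset.univ.filter (fun k => ¬ (k : ℕ) ≤ m) with hS
        set P : Module.End K V := ∑ k ∈ S, Estar k with hP
        have hi'S : i' ∈ S := by
          rw [hS, Finset.mem_filter]
          exact ⟨Finset.mem_univ _, by rw [hi'v]; omega⟩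
        have hPalt : P = 1 - ∑ k ∈ Finset.univ.filter (fun k : Fin (d + 1) => (k : ℕ) ≤ m), Estar k := by
          have hsplit := Finset.sum_filter_add_sum_filter_not Finset.univ
            (fun k : Fin (d + 1) => (k : ℕ) ≤ m) Estar
          rw [hsum] at hsplit
          rw [hP, hS]
          exact (eq_sub_of_add_eq' hsplit)
        have hPT : P ∈ T := by
          rw [hPalt]
          apply Subalgebra.sub_mem _ (Subalgebra.one_mem _)
          apply Subalgebra.sum_mem
          intro k hk
          have hk' : (k : ℕ) ≤ m := (Finset.mem_filter.mp hk).2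
          exact ihs (k : ℕ) (by omega) k.isLt
        have h1 : P * (A * Estar i) = Estar i' * (A * Estar i) := by
          rw [hP]
          apply lcollapse _ S i' hi'S
          intro k hk hkne
          have hk' : ¬ (k : ℕ) ≤ m := by
            have := (Finset.mem_filter.mp (hS ▸ hk)).2
            simpa using this
          have hkv : (k : ℕ) ≠ m + 1 := by
            intro hh
            exact hkne (Fin.ext (by rw [hh, hi'v]))
          have hd2 : 1 < Nat.dist (k : ℕ) (i : ℕ) := by
            rw [hdist, hiv]
            omega
          rw [← mul_assoc]
          exact htri k i hd2
        have h2 : (Estar i * A) * P = (Estar i * A) * Estar i' := by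
          rw [hP]
          apply rcollapse _ S i' hi'S
          intro k hk hkne
          have hk' : ¬ (k : ℕ) ≤ m := by
            have := (Finset.mem_filter.mp (hS ▸ hk)).2
            simpa using this
          have hkv : (k : ℕ) ≠ m + 1 := by
            intro hh
            exact hkne (Fin.ext (by rw [hh, hi'v]))
          have hd2 : 1 < Nat.dist (i : ℕ) (k : ℕ) := by
            rw [hdist, hiv]
            omega
          exact htri i k hd2
        set X : Module.End K V := (P * (A * Estar i)) * ((Estar i * A) * P) with hX
        have hXT : X ∈ T :=
          mul_mem (mul_mem hPT (mul_mem hAT hiT)) (mul_mem (mul_mem hiT hAT) hPT)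
        have hXval : X = (Estar i' * (A * Estar i)) * ((Estar i * A) * Estar i') := by
          rw [hX, h1, h2]
        have hXne : X ≠ 0 := by
          rw [hXval]
          apply comp_ne_zero (Estar i) _ _ (hEstarRank i)
          · rw [mul_assoc, mul_assoc, hidem i]
          · rw [← mul_assoc, ← mul_assoc, hidem i]
          · have := hirr i' i (by rw [hdist, hiv, hi'v]; omega)
            rw [mul_assoc] at this
            exact this
          · exact hirr i i' (by rw [hdist, hiv, hi'v]; omega)
        have hM : Estar i' * ((A * Estar i) * (Estar i * A)) * Estar i' = X := by
          rw [hXval]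
          noncomm_ring
        obtain ⟨c, hc⟩ := corner_key (Estar i') (Estar i') ((A * Estar i) * (Estar i * A)) 1
          (hEstarRank i') (hEstarRank i') (hM ▸ hXne)
        have hfin : Estar i' = c • X := by
          calc Estar i' = Estar i' * 1 * Estar i' := by rw [mul_one, hidem]
          _ = c • (Estar i' * ((A * Estar i) * (Estar i * A)) * Estar i') := hc
          _ = c • X := by rw [hM]
        show Estar i' ∈ T
        rw [hfin]
        exact Subalgebra.smul_mem _ hXT c
  have EinT' : ∀ i : Fin (d + 1), Estar i ∈ T := fun i => EinT (i : ℕ) i.isLt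
  -- conclude
  rw [eq_top_iff]
  intro X _
  have hdecomp : X = ∑ i : Fin (d + 1), ∑ j : Fin (d + 1), Estar i * X * Estar j := by
    calc X = (∑ i, Estar i) * X * (∑ j, Estar j) := by rw [hsum, one_mul, mul_one]
    _ = ∑ i : Fin (d + 1), ∑ j : Fin (d + 1), Estar i * X * Estar j := by
        rw [Finset.sum_mul, Finset.sum_mul]
        exact Finset.sum_congr rfl (fun i _ => by rw [Finset.mul_sum])
  rw [hdecomp]
  apply Subalgebra.sum_mem
  intro i _
  apply Subalgebra.sum_mem
  intro j _
  obtain ⟨c, hc⟩ := corner_key (Estar i) (Estar j) (A ^ Nat.dist (i : ℕ) (j : ℕ)) X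
    (hEstarRank i) (hEstarRank j) (L2 _ i j rfl)
  rw [hc]
  exact Subalgebra.smul_mem _
    (mul_mem (mul_mem (EinT' i) (pow_mem hAT _)) (EinT' j)) c
end

section
/- Let {E*_i}_{i=0}^d be a system of mutually orthogonal idempotents in End(V), and let A ∈ End(V) satisfy E*_i A E*_j = 0 if |i−j| > 1 and E*_i A E*_j ≠ 0 if |i−j| = 1 (0 ≤ i, j ≤ d). Then there exists an antiautomorphism † of End(V) such that A^† = A and (E*_i)^† = E*_i for 0 ≤ i ≤ d. -/
open Matrix

def dchainAux {K : Type*} [Field K] {d : ℕ} (a : Matrix (Fin (d+1)) (Fin (d+1)) K) : ℕ → K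
  | 0 => 1
  | n+1 => if h : n + 1 < d + 1 then
      dchainAux a n * a ⟨n+1, h⟩ ⟨n, Nat.lt_of_succ_lt h⟩ / a ⟨n, Nat.lt_of_succ_lt h⟩ ⟨n+1, h⟩
    else 1

lemma dchainAux_ne_zero {K : Type*} [Field K] {d : ℕ} {a : Matrix (Fin (d+1)) (Fin (d+1)) K}
    (ha1 : ∀ i j : Fin (d+1), Nat.dist (i:ℕ) (j:ℕ) = 1 → a i j ≠ 0) (n : ℕ) :
    dchainAux a n ≠ 0 := by
  induction n with
  | zero => simp [dchainAux]
  | succ n ih =>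
    rw [dchainAux]
    split
    · rename_i h
      have h1 : a ⟨n+1, h⟩ ⟨n, Nat.lt_of_succ_lt h⟩ ≠ 0 := by
        apply ha1; simp [Nat.dist]
      have h2 : a ⟨n, Nat.lt_of_succ_lt h⟩ ⟨n+1, h⟩ ≠ 0 := by
        apply ha1; simp [Nat.dist]
      exact div_ne_zero (mul_ne_zero ih h1) h2
    · exact one_ne_zero

lemma dchainAux_key {K : Type*} [Field K] {d : ℕ} {a : Matrix (Fin (d+1)) (Fin (d+1)) K}
    (ha0 : ∀ i j : Fin (d+1), 1 < Nat.dist (i:ℕ) (j:ℕ) → a i j = 0)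
    (ha1 : ∀ i j : Fin (d+1), Nat.dist (i:ℕ) (j:ℕ) = 1 → a i j ≠ 0)
    (i j : Fin (d+1)) :
    dchainAux a (i:ℕ) * a j i = a i j * dchainAux a (j:ℕ) := by
  have key : ∀ p q : Fin (d+1), (q:ℕ) = (p:ℕ) + 1 →
      dchainAux a (p:ℕ) * a q p = a p q * dchainAux a (q:ℕ) := by
    rintro ⟨pv, hpv⟩ ⟨qv, hqv⟩ hpq
    simp only [Fin.val_mk] at hpq
    subst hpq
    have hne : a ⟨pv, Nat.lt_of_succ_lt hqv⟩ ⟨pv+1, hqv⟩ ≠ 0 := by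
      apply ha1; simp [Nat.dist]
    conv_rhs => rw [dchainAux]
    rw [dif_pos hqv]
    field_simp
  rcases eq_or_ne i j with h | h
  · subst h; ring
  · have hd : Nat.dist (i:ℕ) (j:ℕ) ≠ 0 := fun hc => h (Fin.ext (by simp [Nat.dist] at hc; omega))
    rcases eq_or_ne (Nat.dist (i:ℕ) (j:ℕ)) 1 with h1 | h1
    · have : (j:ℕ) = (i:ℕ) + 1 ∨ (i:ℕ) = (j:ℕ) + 1 := by
        simp [Nat.dist] at h1; omega
      rcases this with hc | hc
      · exact key i j hc
      · have := key j i hc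
        linear_combination -this
    · have hgt : 1 < Nat.dist (i:ℕ) (j:ℕ) := by omega
      rw [ha0 i j hgt, ha0 j i (by rwa [Nat.dist_comm])]
      ring

/-- Let `{E*_i}_{i=0}^d` be a system of mutually orthogonal idempotents in `End(V)`, and
let `A ∈ End(V)` satisfy `E*_i A E*_j = 0` if `|i−j| > 1` and `E*_i A E*_j ≠ 0` if
`|i−j| = 1`. Then there exists an antiautomorphism `†` of `End(V)` such that `A^† = A`
and `(E*_i)^† = E*_i` for `0 ≤ i ≤ d`. -/
theorem stmt_9 {K : Type*} [Field K] {d : ℕ}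
    {V : Type*} [AddCommGroup V] [Module K V] [FiniteDimensional K V]
    (hdim : Module.finrank K V = d + 1)
    (Estar : Fin (d + 1) → Module.End K V)
    (hEstar : ∀ i j, Estar i * Estar j = if i = j then Estar i else 0)
    (hEstarRank : ∀ i, Module.finrank K (LinearMap.range (Estar i)) = 1)
    (A : Module.End K V)
    (htri : ∀ i j : Fin (d + 1), 1 < Nat.dist (i : ℕ) (j : ℕ) → Estar i * A * Estar j = 0)
    (hirr : ∀ i j : Fin (d + 1), Nat.dist (i : ℕ) (j : ℕ) = 1 → Estar i * A * Estar j ≠ 0) :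
    ∃ dag : Module.End K V ≃ₗ[K] Module.End K V,
      (∀ X Y : Module.End K V, dag (X * Y) = dag Y * dag X) ∧
      dag A = A ∧ ∀ i, dag (Estar i) = Estar i := by
  classical
  -- choose a nonzero vector in each range
  have hv : ∀ i, ∃ x : V, x ∈ LinearMap.range (Estar i) ∧ x ≠ 0 := by
    intro i
    have h1 : 0 < Module.finrank K (LinearMap.range (Estar i)) := by
      rw [hEstarRank]; norm_num
    have : Nontrivial (LinearMap.range (Estar i)) := Module.finrank_pos_iff.mp h1
    obtain ⟨x, hx⟩ := exists_ne (0 : LinearMap.range (Estar i))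
    exact ⟨x, x.2, fun h => hx (Subtype.ext h)⟩
  choose v hvmem hvne using hv
  -- action of the idempotents on the chosen vectors
  have hEv : ∀ i j, Estar i (v j) = if i = j then v j else 0 := by
    intro i j
    obtain ⟨w, hw⟩ := hvmem j
    have h2 : Estar i (v j) = (Estar i * Estar j) w := by
      rw [Module.End.mul_apply, hw]
    rw [h2, hEstar]
    split
    · rename_i h; subst h; exact hw
    · rfl
  -- the chosen vectors are linearly independent, hence a basis
  have hli : LinearIndependent K v := by
    rw [Fintype.linearIndependent_iff]
    intro g hg i
    have h3 := congrArg (Estar i) hg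
    rw [map_sum, map_zero] at h3
    simp only [_root_.map_smul, hEv, smul_ite, smul_zero] at h3
    rw [Finset.sum_ite_eq (Finset.univ : Finset (Fin (d+1))) i (fun j => g j • v j)] at h3
    simp only [Finset.mem_univ, if_true] at h3
    rcases smul_eq_zero.mp h3 with h | h
    · exact h
    · exact absurd h (hvne i)
  have hcard : Fintype.card (Fin (d+1)) = Module.finrank K V := by simp [hdim]
  let b : Module.Basis (Fin (d+1)) K V := basisOfLinearIndependentOfCardEqFinrank hli hcard
  have hb : ∀ i, b i = v i := fun i => by
    simp [b, coe_basisOfLinearIndependentOfCardEqFinrank]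
  -- general action formula
  have hEx : ∀ (k : Fin (d+1)) (x : V), Estar k x = (b.repr x) k • v k := by
    intro k x
    conv_lhs => rw [← b.sum_repr x]
    rw [map_sum]
    simp only [_root_.map_smul, hb, hEv, smul_ite, smul_zero]
    rw [Finset.sum_ite_eq (Finset.univ : Finset (Fin (d+1))) k
      (fun j => (b.repr x) j • v j)]
    simp
  -- the matrix of A
  set φ := LinearMap.toMatrixAlgEquiv b with hφ_def
  set a : Matrix (Fin (d+1)) (Fin (d+1)) K := φ A with ha_def
  have ha_apply : ∀ k l, a k l = (b.repr (A (v l))) k := by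
    intro k l
    rw [ha_def, hφ_def, LinearMap.toMatrixAlgEquiv_apply, hb]
  -- triple products detect matrix entries
  have htriple : ∀ k l : Fin (d+1), Estar k * A * Estar l = 0 ↔ a k l = 0 := by
    intro k l
    constructor
    · intro h0
      have h4 : (Estar k * A * Estar l) (v l) = 0 := by rw [h0]; rfl
      rw [Module.End.mul_apply, Module.End.mul_apply, hEv, if_pos rfl] at h4
      rw [hEx k (A (v l))] at h4
      rcases smul_eq_zero.mp h4 with h | h
      · rwa [ha_apply]
      · exact absurd h (hvne k)
    · intro h0
      apply b.ext
      intro m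
      rw [Module.End.mul_apply, Module.End.mul_apply, hb, hEv, LinearMap.zero_apply]
      split
      · rename_i h
        rw [hEx k (A (v m)), ← h, ← ha_apply, h0, zero_smul]
      · simp
  have ha0 : ∀ i j : Fin (d+1), 1 < Nat.dist (i:ℕ) (j:ℕ) → a i j = 0 := fun i j h =>
    (htriple i j).mp (htri i j h)
  have ha1 : ∀ i j : Fin (d+1), Nat.dist (i:ℕ) (j:ℕ) = 1 → a i j ≠ 0 := fun i j h hc =>
    hirr i j h ((htriple i j).mpr hc)
  -- the diagonal conjugating matrix
  set c : Fin (d+1) → K := fun i => dchainAux a (i:ℕ) with hc_def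
  have hcne : ∀ i, c i ≠ 0 := fun i => dchainAux_ne_zero ha1 (i:ℕ)
  set D : Matrix (Fin (d+1)) (Fin (d+1)) K := Matrix.diagonal c with hD_def
  set Dinv : Matrix (Fin (d+1)) (Fin (d+1)) K := Matrix.diagonal (fun i => (c i)⁻¹)
    with hDinv_def
  have hDD : D * Dinv = 1 := by
    rw [hD_def, hDinv_def, Matrix.diagonal_mul_diagonal]
    rw [show (fun i => c i * (c i)⁻¹) = fun _ => (1:K) from funext fun i =>
      mul_inv_cancel₀ (hcne i)]
    exact Matrix.diagonal_one
  have hDD' : Dinv * D = 1 := by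
    rw [hDinv_def, hD_def, Matrix.diagonal_mul_diagonal]
    rw [show (fun i => (c i)⁻¹ * c i) = fun _ => (1:K) from funext fun i =>
      inv_mul_cancel₀ (hcne i)]
    exact Matrix.diagonal_one
  -- the matrix antiautomorphism
  set g : Matrix (Fin (d+1)) (Fin (d+1)) K → Matrix (Fin (d+1)) (Fin (d+1)) K :=
    fun M => D * Mᵀ * Dinv with hg_def
  have hg_mul : ∀ M N, g (M * N) = g N * g M := by
    intro M N
    show D * (M * N)ᵀ * Dinv = (D * Nᵀ * Dinv) * (D * Mᵀ * Dinv)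
    have h5 : D * Nᵀ * Dinv * (D * Mᵀ * Dinv) = D * Nᵀ * ((Dinv * D) * (Mᵀ * Dinv)) := by
      simp only [mul_assoc]
    rw [h5, hDD', one_mul, Matrix.transpose_mul]
    simp only [mul_assoc]
  have hg_invol : ∀ M, g (g M) = M := by
    intro M
    show D * (D * Mᵀ * Dinv)ᵀ * Dinv = M
    rw [Matrix.transpose_mul, Matrix.transpose_mul, Matrix.transpose_transpose,
      hD_def, hDinv_def, Matrix.diagonal_transpose, Matrix.diagonal_transpose,
      ← hD_def, ← hDinv_def]
    calc D * (Dinv * (M * D)) * Dinv = (D * Dinv) * M * (D * Dinv) := by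
          simp only [mul_assoc]
      _ = M := by rw [hDD, one_mul, mul_one]
  have hg_diag : ∀ w : Fin (d+1) → K, g (Matrix.diagonal w) = Matrix.diagonal w := by
    intro w
    show D * (Matrix.diagonal w)ᵀ * Dinv = Matrix.diagonal w
    rw [Matrix.diagonal_transpose, hD_def, hDinv_def, Matrix.diagonal_mul_diagonal,
      Matrix.diagonal_mul_diagonal]
    have he : (fun i => c i * w i * (c i)⁻¹) = w := funext fun i => by
      rw [mul_right_comm, mul_inv_cancel₀ (hcne i), one_mul]
    rw [he]
  have hg_a : g a = a := by
    show D * aᵀ * Dinv = a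
    ext i j
    rw [Matrix.mul_diagonal, Matrix.diagonal_mul, Matrix.transpose_apply]
    have key : c i * a j i = a i j * c j := dchainAux_key ha0 ha1 i j
    rw [key, mul_inv_cancel_right₀ (hcne j)]
  -- diagonal form of the idempotents
  have hφE : ∀ i, φ (Estar i) = Matrix.diagonal (fun m => if m = i then (1:K) else 0) := by
    intro i
    ext k l
    rw [hφ_def, LinearMap.toMatrixAlgEquiv_apply, hb, hEv, Matrix.diagonal_apply]
    rcases eq_or_ne i l with h | h
    · subst h
      rw [if_pos rfl, ← hb, b.repr_self, Finsupp.single_apply]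
      by_cases hk : k = i
      · subst hk; simp
      · rw [if_neg (fun hc => hk hc.symm), if_neg hk]
    · rw [if_neg h, map_zero, Finsupp.coe_zero, Pi.zero_apply]
      split
      · rename_i hkl
        rw [if_neg (by rw [hkl]; exact fun hc => h hc.symm)]
      · rfl
  -- assemble the antiautomorphism
  have hgg_lin_add : ∀ M N, g (M + N) = g M + g N := by
    intro M N
    show D * (M + N)ᵀ * Dinv = D * Mᵀ * Dinv + D * Nᵀ * Dinv
    rw [Matrix.transpose_add, Matrix.mul_add, Matrix.add_mul]
  have hgg_lin_smul : ∀ (r : K) M, g (r • M) = r • g M := by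
    intro r M
    show D * (r • M)ᵀ * Dinv = r • (D * Mᵀ * Dinv)
    rw [Matrix.transpose_smul, Matrix.mul_smul, Matrix.smul_mul]
  refine ⟨{ toFun := fun X => φ.symm (g (φ X)),
            invFun := fun X => φ.symm (g (φ X)),
            map_add' := ?_, map_smul' := ?_, left_inv := ?_, right_inv := ?_ },
          ?_, ?_, ?_⟩
  · intro X Y
    show φ.symm (g (φ (X + Y))) = φ.symm (g (φ X)) + φ.symm (g (φ Y))
    rw [_root_.map_add, hgg_lin_add, _root_.map_add]
  · intro r X
    show φ.symm (g (φ (r • X))) = (RingHom.id K) r • φ.symm (g (φ X))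
    rw [_root_.map_smul, hgg_lin_smul, _root_.map_smul]
    rfl
  · intro X
    simp only [AlgEquiv.apply_symm_apply]
    rw [hg_invol, AlgEquiv.symm_apply_apply]
  · intro X
    simp only [AlgEquiv.apply_symm_apply]
    rw [hg_invol, AlgEquiv.symm_apply_apply]
  · intro X Y
    show φ.symm (g (φ (X * Y))) = φ.symm (g (φ Y)) * φ.symm (g (φ X))
    rw [show φ (X * Y) = φ X * φ Y from _root_.map_mul φ X Y, hg_mul,
      _root_.map_mul φ.symm (g (φ Y)) (g (φ X))]
  · show φ.symm (g (φ A)) = A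
    rw [← ha_def, hg_a, ha_def, AlgEquiv.symm_apply_apply]
  · intro i
    show φ.symm (g (φ (Estar i))) = Estar i
    rw [hφE i, hg_diag, ← hφE i, AlgEquiv.symm_apply_apply]
end

section
/- Assume d ≥ 1. Let {E*_i}_{i=0}^d be a system of mutually orthogonal idempotents in End(V), and let A ∈ End(V) satisfy E*_i A E*_j = 0 if |i−j| > 1 and E*_i A E*_j ≠ 0 if |i−j| = 1 (0 ≤ i, j ≤ d). Assume A is multiplicity-free with primitive idempotents {E_i}_{i=0}^d, let {θ*_i}_{i=0}^d be scalars in K, and set A* = Σ_{i=0}^d θ*_i E*_i. Then for 0 ≤ i, j ≤ d, E_i A* E_j = 0 if and only if E_j A* E_i = 0. -/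
open Matrix Polynomial

/-- If `M` can be symmetrized by an invertible diagonal matrix, then the map
`X ↦ K⁻¹ Xᵀ K` is an antiautomorphism fixing `M`, every polynomial in `M`,
and every diagonal matrix; hence the vanishing of `p(M) D q(M)` is symmetric. -/
lemma matrix_flip {K : Type*} [Field K] {ι : Type*} [Fintype ι] [DecidableEq ι]
    (M : Matrix ι ι K) (k θs : ι → K) (hk : ∀ i, k i ≠ 0)
    (hsym : ∀ i j, k i * M i j = k j * M j i) (p q : K[X])
    (h : aeval M p * diagonal θs * aeval M q = 0) :
    aeval M q * diagonal θs * aeval M p = 0 := by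
  set Kd := diagonal k with hKd
  set Ki := diagonal (fun i => (k i)⁻¹) with hKi
  have hKK : Kd * Ki = 1 := by
    rw [hKd, hKi, diagonal_mul_diagonal]
    have : (fun i => k i * (k i)⁻¹) = fun _ => (1 : K) := by
      funext i; exact mul_inv_cancel₀ (hk i)
    rw [this, diagonal_one]
  have hKK' : Ki * Kd = 1 := by
    rw [hKd, hKi, diagonal_mul_diagonal]
    have : (fun i => (k i)⁻¹ * k i) = fun _ => (1 : K) := by
      funext i; exact inv_mul_cancel₀ (hk i)
    rw [this, diagonal_one]
  set σ : Matrix ι ι K → Matrix ι ι K := fun X => Ki * Xᵀ * Kd with hσ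
  have hmul : ∀ X Y, σ (X * Y) = σ Y * σ X := by
    intro X Y
    show Ki * (X * Y)ᵀ * Kd = (Ki * Yᵀ * Kd) * (Ki * Xᵀ * Kd)
    rw [transpose_mul]
    calc Ki * (Yᵀ * Xᵀ) * Kd = Ki * Yᵀ * ((Kd * Ki) * (Xᵀ * Kd)) := by
          rw [hKK, Matrix.one_mul, ← Matrix.mul_assoc, ← Matrix.mul_assoc]
      _ = (Ki * Yᵀ * Kd) * (Ki * (Xᵀ * Kd)) := by
          rw [Matrix.mul_assoc (Ki * Yᵀ) Kd _, ← Matrix.mul_assoc Kd Ki _]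
      _ = (Ki * Yᵀ * Kd) * (Ki * Xᵀ * Kd) := by rw [Matrix.mul_assoc Ki Xᵀ Kd]
  have hM : σ M = M := by
    show Ki * Mᵀ * Kd = M
    have h1 : Mᵀ * Kd = Kd * M := by
      ext i j
      rw [hKd, mul_diagonal, diagonal_mul, transpose_apply, mul_comm (M j i) (k j)]
      exact (hsym i j).symm ▸ (hsym j i)
    rw [Matrix.mul_assoc, h1, ← Matrix.mul_assoc, hKK', Matrix.one_mul]
  have hone : σ (1 : Matrix ι ι K) = 1 := by
    show Ki * (1 : Matrix ι ι K)ᵀ * Kd = 1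
    rw [transpose_one, Matrix.mul_one, hKK']
  have hpow : ∀ n : ℕ, σ (M ^ n) = M ^ n := by
    intro n
    induction n with
    | zero => rw [pow_zero]; exact hone
    | succ n ih =>
        rw [pow_succ, hmul, ih, hM]
        exact (pow_succ' M n).symm
  have hsmul : ∀ (a : K) (X : Matrix ι ι K), σ (a • X) = a • σ X := by
    intro a X
    show Ki * (a • X)ᵀ * Kd = a • (Ki * Xᵀ * Kd)
    rw [transpose_smul, Matrix.mul_smul, Matrix.smul_mul]
  have hadd : ∀ X Y : Matrix ι ι K, σ (X + Y) = σ X + σ Y := by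
    intro X Y
    show Ki * (X + Y)ᵀ * Kd = _ + _
    rw [transpose_add, Matrix.mul_add, Matrix.add_mul]
  have haeval : ∀ r : K[X], σ (aeval M r) = aeval M r := by
    intro r
    induction r using Polynomial.induction_on' with
    | add f g hf hg => rw [map_add, hadd, hf, hg]
    | monomial n a =>
        have h1 : aeval M (monomial n a) = a • M ^ n := by
          rw [aeval_monomial, Algebra.algebraMap_eq_smul_one, smul_one_mul]
        rw [h1, hsmul, hpow]
  have hD : σ (diagonal θs) = diagonal θs := by
    show Ki * (diagonal θs)ᵀ * Kd = diagonal θs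
    rw [diagonal_transpose, hKi, hKd, diagonal_mul_diagonal, diagonal_mul_diagonal]
    have : (fun i => (k i)⁻¹ * θs i * k i) = θs := by
      funext i
      rw [mul_comm ((k i)⁻¹) (θs i), mul_assoc, inv_mul_cancel₀ (hk i), mul_one]
    rw [this]
  have hzero : σ 0 = 0 := by
    show Ki * (0 : Matrix ι ι K)ᵀ * Kd = 0
    rw [transpose_zero, Matrix.mul_zero, Matrix.zero_mul]
  have := congrArg σ h
  rw [hzero, hmul, hmul, haeval, hD, haeval, ← Matrix.mul_assoc] at this
  exact this

/-- With the standing assumptions (`A` multiplicity-free with primitive idempotents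
`{E_i}`, `A* = Σ θ*_i E*_i`), for `0 ≤ i, j ≤ d` we have
`E_i A* E_j = 0` if and only if `E_j A* E_i = 0`. -/
theorem stmt_12 {K : Type*} [Field K] {d : ℕ} (hd : 1 ≤ d)
    {V : Type*} [AddCommGroup V] [Module K V] [FiniteDimensional K V]
    (hdim : Module.finrank K V = d + 1)
    (Estar : Fin (d + 1) → Module.End K V)
    (hEstar : ∀ i j, Estar i * Estar j = if i = j then Estar i else 0)
    (hEstarRank : ∀ i, Module.finrank K (LinearMap.range (Estar i)) = 1)
    (A : Module.End K V)
    (htri : ∀ i j : Fin (d + 1), 1 < Nat.dist (i : ℕ) (j : ℕ) → Estar i * A * Estar j = 0)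
    (hirr : ∀ i j : Fin (d + 1), Nat.dist (i : ℕ) (j : ℕ) = 1 → Estar i * A * Estar j ≠ 0)
    (θ : Fin (d + 1) → K) (hθ : Function.Injective θ)
    (E : Fin (d + 1) → Module.End K V)
    (hE : ∀ i j, E i * E j = if i = j then E i else 0)
    (hEne : ∀ i, E i ≠ 0)
    (hEsum : ∑ i, E i = 1)
    (hA : A = ∑ i, θ i • E i)
    (θstar : Fin (d + 1) → K)
    (Astar : Module.End K V) (hAstar : Astar = ∑ i, θstar i • Estar i) :
    ∀ i j : Fin (d + 1), E i * Astar * E j = 0 ↔ E j * Astar * E i = 0 := by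
  classical
  -- pick a nonzero vector in each range of Estar i
  have hv : ∀ i, ∃ w : V, w ∈ LinearMap.range (Estar i) ∧ w ≠ 0 := by
    intro i
    have h1 : LinearMap.range (Estar i) ≠ ⊥ := by
      intro hbot
      have := hEstarRank i
      rw [hbot] at this
      simp at this
    obtain ⟨w, hw⟩ := Submodule.exists_mem_ne_zero_of_ne_bot h1
    exact ⟨w, hw⟩
  choose v hvmem hvne using hv
  have hEv : ∀ i j, Estar i (v j) = if i = j then v j else 0 := by
    intro i j
    obtain ⟨w, hw⟩ := hvmem j
    have h1 : Estar i (v j) = (Estar i * Estar j) w := by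
      rw [Module.End.mul_apply, hw]
    rw [h1, hEstar i j]
    by_cases h : i = j
    · simp [h, ← hw, ← Module.End.mul_apply, hEstar j j]
    · simp [h]
  -- the v i form a basis
  have hli : LinearIndependent K v := by
    rw [Fintype.linearIndependent_iff]
    intro g hg i
    have h1 : Estar i (∑ k, g k • v k) = 0 := by rw [hg, map_zero]
    rw [map_sum] at h1
    simp only [_root_.map_smul, hEv, smul_ite, smul_zero] at h1
    rw [Finset.sum_ite_eq] at h1
    simp only [Finset.mem_univ, if_true] at h1
    exact (smul_eq_zero.mp h1).resolve_right (hvne i)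
  let b : Module.Basis (Fin (d + 1)) K V :=
    basisOfLinearIndependentOfCardEqFinrank hli (by simp [hdim])
  have hb : ∀ i, b i = v i := fun i => by
    simp [b, coe_basisOfLinearIndependentOfCardEqFinrank]
  have hEvb : ∀ i j, Estar i (b j) = if i = j then b j else 0 := by
    intro i j; rw [hb j]; exact hEv i j
  set Mfn := LinearMap.toMatrixAlgEquiv b with hMfn
  -- key computation of matrix entries
  have hkey : ∀ (X : Module.End K V) (i j : Fin (d + 1)),
      Estar i (X (b j)) = Mfn X i j • b i := by
    intro X i j
    conv_lhs => rw [← Module.Basis.sum_repr b (X (b j))]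
    rw [map_sum]
    simp only [_root_.map_smul, hEvb, smul_ite, smul_zero]
    rw [Finset.sum_ite_eq]
    simp [hMfn, LinearMap.toMatrixAlgEquiv_apply]
  have hentry : ∀ (X : Module.End K V) (i j : Fin (d + 1)),
      Estar i * X * Estar j = 0 ↔ Mfn X i j = 0 := by
    intro X i j
    constructor
    · intro h
      have h1 : (Estar i * X * Estar j) (b j) = 0 := by rw [h]; rfl
      rw [Module.End.mul_apply, Module.End.mul_apply, hEvb, if_pos rfl, hkey] at h1
      exact (smul_eq_zero.mp h1).resolve_right (b.ne_zero i)
    · intro h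
      apply b.ext
      intro m
      rw [Module.End.mul_apply, Module.End.mul_apply, hEvb]
      by_cases hm : j = m
      · rw [if_pos hm, ← hm, hkey, h, zero_smul, LinearMap.zero_apply]
      · rw [if_neg hm, map_zero, map_zero, LinearMap.zero_apply]
  set MA := Mfn A with hMAdef
  have hMA0 : ∀ i j : Fin (d + 1), 1 < Nat.dist (i : ℕ) (j : ℕ) → MA i j = 0 :=
    fun i j h => (hentry A i j).mp (htri i j h)
  have hMAne : ∀ i j : Fin (d + 1), Nat.dist (i : ℕ) (j : ℕ) = 1 → MA i j ≠ 0 :=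
    fun i j h hz => hirr i j h ((hentry A i j).mpr hz)
  -- matrix of Astar is diagonal
  have hMAstar : Mfn Astar = Matrix.diagonal θstar := by
    have hact : ∀ j, Astar (b j) = θstar j • b j := by
      intro j
      rw [hAstar, LinearMap.sum_apply]
      simp only [LinearMap.smul_apply, hEvb, smul_ite, smul_zero]
      rw [Finset.sum_ite_eq']
      simp
    ext i j
    rw [hMfn, LinearMap.toMatrixAlgEquiv_apply, hact j, _root_.map_smul, b.repr_self]
    by_cases h : i = j
    · subst h; simp [Matrix.diagonal_apply]
    · simp [Matrix.diagonal_apply, h, Finsupp.single_apply, Finsupp.smul_apply, Ne.symm h]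
  -- powers of A
  have hpow : ∀ n : ℕ, A ^ n = ∑ m, θ m ^ n • E m := by
    intro n
    induction n with
    | zero => simp only [pow_zero, one_smul]; exact hEsum.symm
    | succ n ih =>
        rw [pow_succ, ih, hA, Finset.sum_mul_sum]
        have : ∀ m : Fin (d + 1), ∑ l, (θ m ^ n • E m) * (θ l • E l) = θ m ^ (n + 1) • E m := by
          intro m
          have : ∀ l : Fin (d + 1), (θ m ^ n • E m) * (θ l • E l)
              = if m = l then (θ m ^ n * θ l) • E m else 0 := by
            intro l
            rw [smul_mul_smul_comm, hE]
            by_cases h : m = l <;> simp [h]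
          rw [Finset.sum_congr rfl fun l _ => this l, Finset.sum_ite_eq]
          simp [pow_succ]
        exact Finset.sum_congr rfl fun m _ => this m
  -- aeval of A
  have haeval : ∀ p : K[X], aeval A p = ∑ m, p.eval (θ m) • E m := by
    intro p
    induction p using Polynomial.induction_on' with
    | add f g hf hg =>
        rw [map_add, hf, hg, ← Finset.sum_add_distrib]
        exact Finset.sum_congr rfl fun m _ => by rw [eval_add, add_smul]
    | monomial n a =>
        rw [aeval_monomial, hpow n, Finset.mul_sum]
        refine Finset.sum_congr rfl fun m _ => ?_
        rw [← Algebra.smul_def, smul_smul, eval_monomial]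
  -- each E i is a polynomial in A
  have hEpoly : ∀ i, E i = aeval A (Lagrange.basis Finset.univ θ i) := by
    intro i
    rw [haeval, Finset.sum_eq_single i]
    · rw [Lagrange.eval_basis_self (hθ.injOn) (Finset.mem_univ i), one_smul]
    · intro m _ hm
      rw [Lagrange.eval_basis_of_ne (Ne.symm hm) (Finset.mem_univ m), zero_smul]
    · intro h; exact absurd (Finset.mem_univ i) h
  -- the symmetrizing diagonal
  set g : ℕ → K := fun t =>
    if h : t < d then MA ⟨t, by omega⟩ ⟨t + 1, by omega⟩ / MA ⟨t + 1, by omega⟩ ⟨t, by omega⟩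
    else 1 with hg
  have hdist1 : ∀ t : ℕ, Nat.dist (t + 1) t = 1 := by intro t; simp [Nat.dist]
  have hdist1' : ∀ t : ℕ, Nat.dist t (t + 1) = 1 := by intro t; simp [Nat.dist]
  have hgval : ∀ (t : ℕ) (ht : t < d), g t
      = MA ⟨t, by omega⟩ ⟨t + 1, by omega⟩ / MA ⟨t + 1, by omega⟩ ⟨t, by omega⟩ := by
    intro t ht
    simp only [hg]
    rw [dif_pos ht]
  have hgne : ∀ t, g t ≠ 0 := by
    intro t
    by_cases h : t < d
    · rw [hgval t h]
      exact div_ne_zero (hMAne _ _ (hdist1' t)) (hMAne _ _ (hdist1 t))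
    · have : g t = 1 := by simp only [hg]; rw [dif_neg h]
      rw [this]; exact one_ne_zero
  set k : Fin (d + 1) → K := fun i => ∏ t ∈ Finset.range i.val, g t with hkdef
  have hkne : ∀ i, k i ≠ 0 := fun i => Finset.prod_ne_zero_iff.mpr fun t _ => hgne t
  have hstep : ∀ (t : ℕ) (ht : t < d), k ⟨t + 1, by omega⟩ * MA ⟨t + 1, by omega⟩ ⟨t, by omega⟩
      = k ⟨t, by omega⟩ * MA ⟨t, by omega⟩ ⟨t + 1, by omega⟩ := by
    intro t ht
    have h1 : k ⟨t + 1, by omega⟩ = k ⟨t, by omega⟩ * g t := by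
      rw [hkdef]; exact Finset.prod_range_succ g t
    rw [h1, hgval t ht, mul_assoc, div_mul_cancel₀]
    exact hMAne _ _ (hdist1 t)
  have hhalf : ∀ i j : Fin (d + 1), (i : ℕ) < (j : ℕ) → k i * MA i j = k j * MA j i := by
    intro i j hij
    by_cases h1 : (j : ℕ) = (i : ℕ) + 1
    · have hj : j = ⟨(i : ℕ) + 1, by omega⟩ := Fin.ext h1
      rw [hj]
      exact (hstep (i : ℕ) (by have := j.isLt; omega)).symm
    · have h2 : 1 < Nat.dist (i : ℕ) (j : ℕ) := by simp [Nat.dist]; omega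
      have h3 : 1 < Nat.dist (j : ℕ) (i : ℕ) := by simp [Nat.dist]; omega
      rw [hMA0 i j h2, hMA0 j i h3, mul_zero, mul_zero]
  have hsym : ∀ i j : Fin (d + 1), k i * MA i j = k j * MA j i := by
    intro i j
    rcases Nat.lt_trichotomy (i : ℕ) (j : ℕ) with h | h | h
    · exact hhalf i j h
    · have : i = j := Fin.ext h
      rw [this]
    · exact (hhalf j i h).symm
  -- conclude via the matrix antiautomorphism
  have hmap : ∀ m : Fin (d + 1), Mfn (E m) = aeval MA (Lagrange.basis Finset.univ θ m) := by
    intro m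
    rw [hEpoly m, hMAdef]
    have h2 := Polynomial.aeval_algHom_apply Mfn.toAlgHom A (Lagrange.basis Finset.univ θ m)
    simpa using h2.symm
  have main : ∀ i j : Fin (d + 1), E i * Astar * E j = 0 → E j * Astar * E i = 0 := by
    intro i j h
    have h0 : aeval MA (Lagrange.basis Finset.univ θ i) * Matrix.diagonal θstar
        * aeval MA (Lagrange.basis Finset.univ θ j) = 0 := by
      rw [← hmap, ← hmap, ← hMAstar, ← _root_.map_mul, ← _root_.map_mul, h, map_zero]
    have h1 := matrix_flip MA k θstar hkne hsym _ _ h0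
    apply Mfn.injective
    rw [_root_.map_mul, _root_.map_mul, hmap, hmap, hMAstar, map_zero]
    exact h1
  exact fun i j => ⟨main i j, main j i⟩
end

section
/- Adopt the standing assumptions, and let Δ be the associated graph. Then (A; {E_i}_{i=0}^d; A*; {E*_i}_{i=0}^d) is a Leonard system on V if and only if the edge set of Δ is exactly {{i−1, i} : 1 ≤ i ≤ d} (i.e., Δ is a path in which vertices i−1 and i are adjacent for 1 ≤ i ≤ d). -/
open Polynomial in
private lemma aux_idem_witness {K : Type*} [Field K] {V : Type*} [AddCommGroup V] [Module K V]
    [FiniteDimensional K V] {n : ℕ} (hdim : Module.finrank K V = n + 1)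
    (F : Fin (n + 1) → Module.End K V)
    (hF : ∀ i j, F i * F j = if i = j then F i else 0)
    (hFne : ∀ i, F i ≠ 0) :
    ∃ w : Fin (n + 1) → V, (∀ i, w i ≠ 0) ∧ (∀ i, F i (w i) = w i) ∧
      (∀ i j, i ≠ j → F i (w j) = 0) ∧ Submodule.span K (Set.range w) = ⊤ := by
  have hex : ∀ i, ∃ x, F i x ≠ 0 := by
    intro i
    by_contra hc
    push_neg at hc
    exact hFne i (LinearMap.ext fun x => hc x)
  choose x hx using hex
  refine ⟨fun i => F i (x i), ?_, ?_, ?_, ?_⟩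
  · exact hx
  · intro i
    have := congrArg (fun f => (f : Module.End K V) (x i)) (hF i i)
    simpa [Module.End.mul_apply] using this
  · intro i j hij
    have := congrArg (fun f => (f : Module.End K V) (x j)) (hF i j)
    simpa [Module.End.mul_apply, if_neg hij] using this
  · have hww : ∀ i, F i (F i (x i)) = F i (x i) := by
      intro i
      have := congrArg (fun f => (f : Module.End K V) (x i)) (hF i i)
      simpa [Module.End.mul_apply] using this
    have hw0 : ∀ i j, i ≠ j → F i (F j (x j)) = 0 := by
      intro i j hij
      have := congrArg (fun f => (f : Module.End K V) (x j)) (hF i j)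
      simpa [Module.End.mul_apply, if_neg hij] using this
    have hli : LinearIndependent K (fun i => F i (x i)) := by
      rw [linearIndependent_iff']
      intro s g hsum i hi
      have h2 := congrArg (F i) hsum
      rw [map_sum, map_zero] at h2
      have h3 : ∀ j ∈ s, F i (g j • F j (x j)) = if j = i then g i • F i (x i) else 0 := by
        intro j _
        by_cases hji : j = i
        · subst hji
          simp [map_smul, hww j]
        · simp [map_smul, hw0 i j (fun e => hji e.symm), hji]
      rw [Finset.sum_congr rfl h3, Finset.sum_ite_eq' s i] at h2
      rw [if_pos hi] at h2
      rcases smul_eq_zero.mp h2 with h | h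
      · exact h
      · exact absurd h (hx i)
    exact hli.span_eq_top_of_card_eq_finrank (by simp [hdim])

/-- With the standing assumptions, the sequence `(A; {E_i}; A*; {E*_i})` is a Leonard
system if and only if the edge set of the graph `Δ` is exactly `{{i−1, i} : 1 ≤ i ≤ d}`.
Here, being a Leonard system amounts (given the standing assumptions) to: `A*` is
multiplicity-free with primitive idempotents `{E*_i}` (i.e. the `θ*_i` are mutually
distinct), and `E_i A* E_j = 0` if `|i−j| > 1`, `E_i A* E_j ≠ 0` if `|i−j| = 1`. -/
theorem stmt_13 {K : Type*} [Field K] {d : ℕ} (hd : 1 ≤ d)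
    {V : Type*} [AddCommGroup V] [Module K V] [FiniteDimensional K V]
    (hdim : Module.finrank K V = d + 1)
    (Estar : Fin (d + 1) → Module.End K V)
    (hEstar : ∀ i j, Estar i * Estar j = if i = j then Estar i else 0)
    (hEstarRank : ∀ i, Module.finrank K (LinearMap.range (Estar i)) = 1)
    (A : Module.End K V)
    (htri : ∀ i j : Fin (d + 1), 1 < Nat.dist (i : ℕ) (j : ℕ) → Estar i * A * Estar j = 0)
    (hirr : ∀ i j : Fin (d + 1), Nat.dist (i : ℕ) (j : ℕ) = 1 → Estar i * A * Estar j ≠ 0)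
    (θ : Fin (d + 1) → K) (hθ : Function.Injective θ)
    (E : Fin (d + 1) → Module.End K V)
    (hE : ∀ i j, E i * E j = if i = j then E i else 0)
    (hEne : ∀ i, E i ≠ 0)
    (hEsum : ∑ i, E i = 1)
    (hA : A = ∑ i, θ i • E i)
    (θstar : Fin (d + 1) → K)
    (Astar : Module.End K V) (hAstar : Astar = ∑ i, θstar i • Estar i) :
    (Function.Injective θstar ∧
        ∀ i j : Fin (d + 1),
          (1 < Nat.dist (i : ℕ) (j : ℕ) → E i * Astar * E j = 0) ∧
          (Nat.dist (i : ℕ) (j : ℕ) = 1 → E i * Astar * E j ≠ 0)) ↔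
      (∀ i j : Fin (d + 1), i ≠ j →
        (E i * Astar * E j ≠ 0 ↔ Nat.dist (i : ℕ) (j : ℕ) = 1)) := by
  have hdist0 : ∀ i j : Fin (d + 1), i ≠ j → Nat.dist (i : ℕ) (j : ℕ) ≠ 0 := by
    intro i j hij h0
    exact hij (Fin.ext (Nat.eq_of_dist_eq_zero h0))
  constructor
  · rintro ⟨hinj, hcond⟩ i j hij
    constructor
    · intro hne
      by_contra hdist
      have h1 : 1 < Nat.dist (i : ℕ) (j : ℕ) := by
        have := hdist0 i j hij; omega
      exact hne ((hcond i j).1 h1)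
    · exact (hcond i j).2
  · intro h
    have hcond : ∀ i j : Fin (d + 1),
        (1 < Nat.dist (i : ℕ) (j : ℕ) → E i * Astar * E j = 0) ∧
        (Nat.dist (i : ℕ) (j : ℕ) = 1 → E i * Astar * E j ≠ 0) := by
      intro i j
      constructor
      · intro hgt
        have hij : i ≠ j := by
          intro e; subst e; simp [Nat.dist_self] at hgt
        by_contra hne
        have := (h i j hij).1 hne
        omega
      · intro h1
        have hij : i ≠ j := by
          intro e; subst e; simp [Nat.dist_self] at h1
        exact (h i j hij).2 h1
    classical
    refine ⟨?_, hcond⟩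
    have hEidem : ∀ (i : Fin (d + 1)) (x : V), E i (E i x) = E i x := by
      intro i x
      have := congrArg (fun f : Module.End K V => f x) (hE i i)
      simpa [Module.End.mul_apply] using this
    -- Main work: injectivity of θstar.
    -- Witness vectors for the E family.
    obtain ⟨w, hwne, hww, hw0, hwspan⟩ := aux_idem_witness hdim E hE hEne
    -- range of E i is spanned by w i
    have hrange : ∀ (i : Fin (d + 1)) (x : V), ∃ c : K, E i x = c • w i := by
      intro i x
      have hx : x ∈ Submodule.span K (Set.range w) := hwspan ▸ Submodule.mem_top
      induction hx using Submodule.span_induction with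
      | mem y hy =>
        obtain ⟨j, rfl⟩ := hy
        by_cases hij : i = j
        · subst hij; exact ⟨1, by rw [hww, one_smul]⟩
        · exact ⟨0, by rw [hw0 i j hij, zero_smul]⟩
      | zero => exact ⟨0, by simp⟩
      | add y z _ _ hy hz =>
        obtain ⟨c1, hc1⟩ := hy; obtain ⟨c2, hc2⟩ := hz
        exact ⟨c1 + c2, by rw [map_add, hc1, hc2, add_smul]⟩
      | smul a y _ hy =>
        obtain ⟨c, hc⟩ := hy
        exact ⟨a * c, by rw [map_smul, hc, smul_smul]⟩
    -- Witness vectors for the Estar family; sum of Estar is 1.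
    have hEstarne : ∀ i, Estar i ≠ 0 := by
      intro i he
      have := hEstarRank i
      rw [he, LinearMap.range_zero] at this
      simp at this
    obtain ⟨ws, hwsne, hwsws, hws0, hwsspan⟩ := aux_idem_witness hdim Estar hEstar hEstarne
    have hEstarSum : ∑ i, Estar i = 1 := by
      apply LinearMap.ext_on hwsspan
      rintro x ⟨j, rfl⟩
      rw [LinearMap.sum_apply, Module.End.one_apply]
      rw [Finset.sum_eq_single j (fun i _ hij => hws0 i j hij) (by simp)]
      exact hwsws j
    -- powers of Astar
    have hpow : ∀ m : ℕ, Astar ^ m = ∑ i, θstar i ^ m • Estar i := by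
      intro m
      induction m with
      | zero => simp [hEstarSum]
      | succ m ih =>
        rw [pow_succ, ih, hAstar, Finset.sum_mul]
        apply Finset.sum_congr rfl
        intro i _
        rw [Finset.mul_sum]
        rw [Finset.sum_eq_single i ?_ (by simp)]
        · rw [smul_mul_assoc, mul_smul_comm, hEstar i i, if_pos rfl, smul_smul, ← pow_succ]
        · intro j _ hji
          rw [smul_mul_assoc, mul_smul_comm, hEstar i j, if_neg (fun e => hji e.symm),
            smul_zero, smul_zero]
    -- vanishing lemma: E j * Astar^m * E 0 = 0 for m < j
    set z : Fin (d + 1) := 0 with hz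
    have hvanish : ∀ (m : ℕ) (j : Fin (d + 1)), m < (j : ℕ) → E j * Astar ^ m * E z = 0 := by
      intro m
      induction m with
      | zero =>
        intro j hj
        have hjz : j ≠ z := by
          intro e; rw [e] at hj; simp [hz] at hj
        rw [pow_zero, mul_one, hE, if_neg hjz]
      | succ m ih =>
        intro j hj
        have key : E j * Astar ^ (m + 1) * E z = ∑ k, E j * Astar * E k * (Astar ^ m * E z) := by
          calc E j * Astar ^ (m + 1) * E z
              = E j * Astar * (∑ k, E k) * (Astar ^ m * E z) := by
                rw [hEsum, mul_one, pow_succ']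
                simp only [mul_assoc]
            _ = ∑ k, E j * Astar * E k * (Astar ^ m * E z) := by
                rw [Finset.mul_sum, Finset.sum_mul]
        rw [key]
        apply Finset.sum_eq_zero
        intro k _
        rcases le_or_gt (k : ℕ) m with hk | hk
        · have hne : E j * Astar * E k = 0 := by
            by_contra hne
            have hjk : j ≠ k := by
              intro e; subst e; omega
            have := (h j k hjk).1 hne
            rw [Nat.dist] at this
            omega
          rw [hne, zero_mul]
        · have h0 : E k * Astar ^ m * E z = 0 := ih k hk
          calc E j * Astar * E k * (Astar ^ m * E z)
              = E j * Astar * (E k * Astar ^ m * E z) := by simp only [mul_assoc]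
            _ = 0 := by rw [h0, mul_zero]
    -- the key nonvanishing sequence
    have hv0 : E z (w z) = w z := hww z
    have hCm : ∀ m : ℕ, (hm : m ≤ d) → E ⟨m, by omega⟩ ((Astar ^ m) (w z)) ≠ 0 := by
      intro m
      induction m with
      | zero =>
        intro _
        have : (⟨0, by omega⟩ : Fin (d + 1)) = z := rfl
        rw [this, pow_zero, Module.End.one_apply, hv0]
        exact hwne z
      | succ m ih =>
        intro hm
        have hm' : m ≤ d := by omega
        set i1 : Fin (d + 1) := ⟨m + 1, by omega⟩ with hi1
        set i0 : Fin (d + 1) := ⟨m, by omega⟩ with hi0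
        have hu := ih hm'
        -- rewrite as operator applied to w z
        have hop : E i1 ((Astar ^ (m + 1)) (w z)) = (E i1 * Astar ^ (m + 1) * E z) (w z) := by
          simp [Module.End.mul_apply, hv0]
        have key : E i1 * Astar ^ (m + 1) * E z
            = ∑ k, E i1 * Astar * E k * (Astar ^ m * E z) := by
          calc E i1 * Astar ^ (m + 1) * E z
              = E i1 * Astar * (∑ k, E k) * (Astar ^ m * E z) := by
                rw [hEsum, mul_one, pow_succ']
                simp only [mul_assoc]
            _ = ∑ k, E i1 * Astar * E k * (Astar ^ m * E z) := by
                rw [Finset.mul_sum, Finset.sum_mul]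
        have hsingle : E i1 * Astar ^ (m + 1) * E z
            = E i1 * Astar * E i0 * (Astar ^ m * E z) := by
          rw [key]
          apply Finset.sum_eq_single i0
          · intro k _ hki0
            rcases lt_or_ge (k : ℕ) m with hk | hk
            · have hne : E i1 * Astar * E k = 0 := by
                by_contra hne
                have hjk : i1 ≠ k := by
                  intro e; rw [← e] at hk; simp [hi1] at hk
                have := (h i1 k hjk).1 hne
                rw [Nat.dist] at this
                simp [hi1] at this
                omega
              rw [hne, zero_mul]
            · have hk' : m < (k : ℕ) := by
                rcases Nat.eq_or_lt_of_le hk with he | hlt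
                · exfalso; exact hki0 (Fin.ext (by simp [hi0]; omega))
                · exact hlt
              have h0 : E k * Astar ^ m * E z = 0 := hvanish m k hk'
              calc E i1 * Astar * E k * (Astar ^ m * E z)
                  = E i1 * Astar * (E k * Astar ^ m * E z) := by simp only [mul_assoc]
                _ = 0 := by rw [h0, mul_zero]
          · intro habs; exact absurd (Finset.mem_univ i0) habs
        set B : Module.End K V := E i1 * Astar * E i0 with hB
        have hBE : B * E i0 = B := by
          rw [hB]
          calc E i1 * Astar * E i0 * E i0 = E i1 * Astar * (E i0 * E i0) := by
                simp only [mul_assoc]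
            _ = E i1 * Astar * E i0 := by rw [hE i0 i0, if_pos rfl]
        have hBne : B ≠ 0 := by
          have hne10 : i1 ≠ i0 := by
            intro e
            have := congrArg Fin.val e
            simp [hi1, hi0] at this
          apply (h i1 i0 hne10).2
          show Nat.dist (m + 1) m = 1
          unfold Nat.dist
          omega
        -- the value equals B applied to u := E i0 (Astar^m (w z))
        set u : V := E i0 ((Astar ^ m) (w z)) with hudef
        have hval : E i1 ((Astar ^ (m + 1)) (w z)) = B u := by
          rw [hop, hsingle, ← hBE]
          simp [Module.End.mul_apply, hv0, hudef, hEidem]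
        rw [hval]
        -- B u ≠ 0 since range E i0 is spanned by w i0
        obtain ⟨c, hc⟩ := hrange i0 ((Astar ^ m) (w z))
        have hcne : c ≠ 0 := by
          intro e; rw [e, zero_smul] at hc; exact hu hc
        have hBw : B (w i0) ≠ 0 := by
          intro hbw
          apply hBne
          apply LinearMap.ext_on hwspan
          rintro x ⟨j, rfl⟩
          rw [LinearMap.zero_apply, ← hBE, Module.End.mul_apply]
          by_cases hj : i0 = j
          · subst hj; rw [hww, hbw]
          · rw [hw0 i0 j hj, map_zero]
        have : B u = c • B (w i0) := by rw [hudef, hc, map_smul]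
        rw [this]
        simp [hcne, hBw]
    -- now the polynomial argument
    intro a b hab
    by_contra hne
    set S : Finset K := Finset.image θstar Finset.univ with hS
    have hcard : S.card ≤ d := by
      have hsub : S ⊆ Finset.image θstar (Finset.univ.erase b) := by
        intro s hs
        rw [hS, Finset.mem_image] at hs
        obtain ⟨i, _, rfl⟩ := hs
        by_cases hib : i = b
        · subst hib
          exact Finset.mem_image.mpr ⟨a, Finset.mem_erase.mpr ⟨hne, Finset.mem_univ a⟩, hab⟩
        · exact Finset.mem_image.mpr ⟨i, Finset.mem_erase.mpr ⟨hib, Finset.mem_univ i⟩, rfl⟩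
      calc S.card ≤ (Finset.image θstar (Finset.univ.erase b)).card := Finset.card_le_card hsub
        _ ≤ (Finset.univ.erase b).card := Finset.card_image_le
        _ = d := by rw [Finset.card_erase_of_mem (Finset.mem_univ b)]; simp
    set p : Polynomial K := ∏ s ∈ S, (Polynomial.X - Polynomial.C s) with hp
    have hmonic : p.Monic := Polynomial.monic_prod_of_monic _ _ fun s _ => Polynomial.monic_X_sub_C s
    have hdeg : p.natDegree = S.card := by
      rw [hp, Polynomial.natDegree_prod _ _ (fun s _ => Polynomial.X_sub_C_ne_zero s)]
      simp [Polynomial.natDegree_X_sub_C]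
    -- aeval of any polynomial
    have haq : ∀ q : Polynomial K,
        (Polynomial.aeval Astar) q = ∑ i, q.eval (θstar i) • Estar i := by
      intro q
      rw [Polynomial.aeval_eq_sum_range]
      have heval : ∀ i : Fin (d + 1), q.eval (θstar i)
          = ∑ m ∈ Finset.range (q.natDegree + 1), q.coeff m * θstar i ^ m :=
        fun i => Polynomial.eval_eq_sum_range _
      simp_rw [heval, Finset.sum_smul, hpow, Finset.smul_sum, smul_smul]
      rw [Finset.sum_comm]
    have hpA : (Polynomial.aeval Astar) p = 0 := by
      rw [haq]
      apply Finset.sum_eq_zero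
      intro i _
      have : p.eval (θstar i) = 0 := by
        rw [hp, Polynomial.eval_prod]
        apply Finset.prod_eq_zero (Finset.mem_image_of_mem θstar (Finset.mem_univ i))
        simp
      rw [this, zero_smul]
    -- expand aeval as sum of powers
    have hdlt : p.natDegree < d + 1 := by omega
    have hexp : ∑ m ∈ Finset.range (d + 1), p.coeff m • ((Astar ^ m) (w z)) = (0 : V) := by
      have := congrArg (fun f : Module.End K V => f (w z))
        (Polynomial.aeval_eq_sum_range' hdlt Astar)
      rw [hpA] at this
      simpa [LinearMap.sum_apply, LinearMap.smul_apply] using this.symm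
    set N := p.natDegree with hN
    have hNd : N ≤ d := by omega
    set jN : Fin (d + 1) := ⟨N, by omega⟩ with hjN
    have hfinal := congrArg (E jN) hexp
    rw [map_sum, map_zero] at hfinal
    have hterms : ∀ m ∈ Finset.range (d + 1),
        E jN (p.coeff m • ((Astar ^ m) (w z)))
          = if m = N then E jN ((Astar ^ N) (w z)) else 0 := by
      intro m hmr
      rcases lt_trichotomy m N with hlt | heq | hgt
      · rw [if_neg (by omega), map_smul]
        have h0 : E jN * Astar ^ m * E z = 0 := hvanish m jN (by simp [hjN]; omega)
        have : E jN ((Astar ^ m) (w z)) = (E jN * Astar ^ m * E z) (w z) := by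
          simp [Module.End.mul_apply, hv0]
        rw [this, h0, LinearMap.zero_apply, smul_zero]
      · subst heq
        rw [if_pos rfl, map_smul]
        have hc1 : p.coeff N = 1 := by rw [hN]; exact hmonic.coeff_natDegree
        rw [hc1, one_smul]
      · rw [if_neg (by omega)]
        have hc0 : p.coeff m = 0 :=
          Polynomial.coeff_eq_zero_of_natDegree_lt (by omega)
        rw [hc0, zero_smul, map_zero]
    rw [Finset.sum_congr rfl hterms, Finset.sum_ite_eq' (Finset.range (d + 1)) N,
      if_pos (Finset.mem_range.mpr (by omega))] at hfinal
    exact hCm N hNd hfinal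
end

section
/- Adopt the standing assumptions, let Δ be the associated graph, fix a subset S ⊆ {0,1,...,d}, and let U = Σ_{h∈S} E_h V. Then the following are equivalent: (i) A*U ⊆ U; (ii) for all i ∈ S and all j in the complement of S in {0,1,...,d}, the vertices i and j are not adjacent in Δ. -/
/-- With the standing assumptions, fix `S ⊆ {0,…,d}` and let `U = Σ_{h∈S} E_h V`.
Then `A* U ⊆ U` iff for all `i ∈ S` and `j ∉ S`, the vertices `i, j` are not
adjacent in the graph `Δ`. -/
theorem stmt_16 {K : Type*} [Field K] {d : ℕ} (hd : 1 ≤ d)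
    {V : Type*} [AddCommGroup V] [Module K V] [FiniteDimensional K V]
    (hdim : Module.finrank K V = d + 1)
    (Estar : Fin (d + 1) → Module.End K V)
    (hEstar : ∀ i j, Estar i * Estar j = if i = j then Estar i else 0)
    (hEstarRank : ∀ i, Module.finrank K (LinearMap.range (Estar i)) = 1)
    (A : Module.End K V)
    (htri : ∀ i j : Fin (d + 1), 1 < Nat.dist (i : ℕ) (j : ℕ) → Estar i * A * Estar j = 0)
    (hirr : ∀ i j : Fin (d + 1), Nat.dist (i : ℕ) (j : ℕ) = 1 → Estar i * A * Estar j ≠ 0)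
    (θ : Fin (d + 1) → K) (hθ : Function.Injective θ)
    (E : Fin (d + 1) → Module.End K V)
    (hE : ∀ i j, E i * E j = if i = j then E i else 0)
    (hEne : ∀ i, E i ≠ 0)
    (hEsum : ∑ i, E i = 1)
    (hA : A = ∑ i, θ i • E i)
    (θstar : Fin (d + 1) → K)
    (Astar : Module.End K V) (hAstar : Astar = ∑ i, θstar i • Estar i)
    (S : Finset (Fin (d + 1)))
    (U : Submodule K V) (hU : U = ∑ h ∈ S, LinearMap.range (E h)) :
    (∀ v ∈ U, Astar v ∈ U) ↔
      ∀ i ∈ S, ∀ j ∉ S, ¬(i ≠ j ∧ E i * Astar * E j ≠ 0) := by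
  classical
  -- choose nonzero vectors in each range
  have hex : ∀ i : Fin (d+1), ∃ v : V, v ∈ LinearMap.range (Estar i) ∧ v ≠ 0 := by
    intro i
    have h1 : 0 < Module.finrank K (LinearMap.range (Estar i)) := by rw [hEstarRank]; norm_num
    rw [Module.finrank_pos_iff] at h1
    obtain ⟨⟨x, hx⟩, hne⟩ := exists_ne (0 : LinearMap.range (Estar i))
    exact ⟨x, hx, by simpa [Subtype.ext_iff] using hne⟩
  choose v hvmem hvne using hex
  have hEv : ∀ i j, Estar i (v j) = if i = j then v j else 0 := by
    intro i j
    obtain ⟨w, hw⟩ := hvmem j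
    have := congrArg (fun f : Module.End K V => f w) (hEstar i j)
    simp only [Module.End.mul_apply] at this
    rw [hw] at this
    split at this <;> simp_all
  -- linear independence
  have hli : LinearIndependent K v := by
    rw [Fintype.linearIndependent_iff]
    intro g hg i
    have := congrArg (Estar i) hg
    rw [map_sum, map_zero] at this
    simp only [map_smul, hEv] at this
    rw [Finset.sum_eq_single i] at this
    · simp only [if_pos rfl, smul_eq_zero] at this
      exact this.resolve_right (hvne i)
    · intro b _ hb; rw [if_neg (Ne.symm hb), smul_zero]
    · simp
  have hcard : Fintype.card (Fin (d+1)) = Module.finrank K V := by simp [hdim]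
  let b : Module.Basis (Fin (d+1)) K V := basisOfLinearIndependentOfCardEqFinrank hli hcard
  have hbv : ⇑b = v := coe_basisOfLinearIndependentOfCardEqFinrank hli hcard
  -- representation of Estar
  have hEx : ∀ (i : Fin (d+1)) (x : V), Estar i x = b.repr x i • v i := by
    intro i x
    conv_lhs => rw [← b.sum_repr x]
    rw [map_sum]
    simp only [map_smul, hbv, hEv]
    rw [Finset.sum_eq_single i]
    · simp
    · intro c _ hc; rw [if_neg (Ne.symm hc), smul_zero]
    · simp
  -- matrix entries of A
  set a : Fin (d+1) → Fin (d+1) → K := fun i j => b.repr (A (v j)) i with ha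
  have hEAv : ∀ i j, Estar i (A (v j)) = a i j • v i := fun i j => hEx i (A (v j))
  have haz : ∀ i j : Fin (d+1), 1 < Nat.dist (i : ℕ) (j : ℕ) → a i j = 0 := by
    intro i j hij
    have h0 := congrArg (fun f : Module.End K V => f (v j)) (htri i j hij)
    simp only [Module.End.mul_apply, LinearMap.zero_apply] at h0
    rw [hEv j j, if_pos rfl, hEAv i j] at h0
    exact (smul_eq_zero.mp h0).resolve_right (hvne i)
  have hane : ∀ i j : Fin (d+1), Nat.dist (i : ℕ) (j : ℕ) = 1 → a i j ≠ 0 := by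
    intro i j hij h0
    apply hirr i j hij
    ext x
    simp only [Module.End.mul_apply, LinearMap.zero_apply]
    rw [hEx j x, map_smul, map_smul, hEAv i j, h0, zero_smul, smul_zero]
  -- the diagonal scaling
  open Fin.NatCast in
  set D : Fin (d+1) → K := fun i => ∏ m ∈ Finset.range (i : ℕ),
      (a (m : Fin (d+1)) ((m+1 : ℕ) : Fin (d+1)) / a ((m+1 : ℕ) : Fin (d+1)) (m : Fin (d+1))) with hD
  open Fin.NatCast in
  have hfac : ∀ m : ℕ, m < d →
      Nat.dist ((((m : ℕ) : Fin (d+1)) : ℕ)) ((((m+1 : ℕ) : Fin (d+1)) : ℕ)) = 1 ∧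
      Nat.dist ((((m+1 : ℕ) : Fin (d+1)) : ℕ)) ((((m : ℕ) : Fin (d+1)) : ℕ)) = 1 := by
    intro m hm
    rw [Fin.val_cast_of_lt (by omega), Fin.val_cast_of_lt (by omega)]
    constructor <;> simp [Nat.dist] <;> omega
  have hDne : ∀ i, D i ≠ 0 := by
    intro i
    rw [hD]
    apply Finset.prod_ne_zero_iff.mpr
    intro m hm
    rw [Finset.mem_range] at hm
    have hmd : m < d := lt_of_lt_of_le hm (Nat.lt_succ_iff.mp i.isLt)
    obtain ⟨h1, h2⟩ := hfac m hmd
    exact div_ne_zero (hane _ _ h1) (hane _ _ h2)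
  have hDaa : ∀ i j : Fin (d+1), D i * a i j = D j * a j i := by
    intro i j
    rcases Nat.lt_trichotomy (Nat.dist (i : ℕ) (j : ℕ)) 1 with h | h | h
    · have : (i : ℕ) = (j : ℕ) := by simp [Nat.dist] at h; omega
      have : i = j := Fin.ext this
      rw [this]
    · -- dist = 1 : wlog j = i+1 or i = j+1
      have key : ∀ p q : Fin (d+1), (q : ℕ) = (p : ℕ) + 1 → D p * a p q = D q * a q p := by
        intro p q hpq
        have hpd : (p : ℕ) < d := by have := q.isLt; omega
        have hDq : D q = D p * (a p q / a q p) := by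
          rw [hD]
          simp only
          rw [hpq, Finset.prod_range_succ]
          congr 2 <;> rw [Fin.cast_val_eq_self] <;> try rw [← hpq, Fin.cast_val_eq_self]
        have hqp : a q p ≠ 0 := by
          apply hane; simp [Nat.dist]; omega
        rw [hDq]
        field_simp
      have : (j : ℕ) = (i : ℕ) + 1 ∨ (i : ℕ) = (j : ℕ) + 1 := by simp [Nat.dist] at h; omega
      rcases this with h1 | h1
      · exact key i j h1
      · exact (key j i h1).symm
    · rw [haz i j h, haz j i (by rwa [Nat.dist_comm])]
      ring
  -- the bilinear form
  set Bf : V →ₗ[K] V →ₗ[K] K := LinearMap.mk₂ K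
      (fun x y => ∑ i, D i * b.repr x i * b.repr y i)
      (by intro x x' y; simp [map_add, mul_add, add_mul, Finset.sum_add_distrib])
      (by intro c x y; simp [Finset.mul_sum]; ring_nf;
          exact Finset.sum_congr rfl fun i _ => by ring)
      (by intro x y y'; simp [map_add, mul_add, Finset.sum_add_distrib])
      (by intro c x y; simp [Finset.mul_sum]; exact Finset.sum_congr rfl fun i _ => by ring)
    with hBf
  have hBapp : ∀ x y, Bf x y = ∑ i, D i * b.repr x i * b.repr y i := by
    intro x y; rw [hBf]; simp
  have hBsymm : ∀ x y, Bf x y = Bf y x := by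
    intro x y; rw [hBapp, hBapp]; exact Finset.sum_congr rfl fun i _ => by ring
  have hBnd : ∀ x : V, (∀ y, Bf x y = 0) → x = 0 := by
    intro x hx
    have hco : ∀ j, b.repr x j = 0 := by
      intro j
      have := hx (v j)
      rw [hBapp] at this
      have hrv : ∀ i : Fin (d+1), b.repr (v j) i = if i = j then 1 else 0 := by
        intro i; rw [← hbv, b.repr_self, Finsupp.single_apply, eq_comm]
        simp [eq_comm]
      rw [Finset.sum_eq_single j] at this
      · rw [hrv j, if_pos rfl, mul_one] at this
        rcases mul_eq_zero.mp this with h | h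
        · exact absurd h (hDne j)
        · exact h
      · intro c _ hc; rw [hrv c, if_neg hc, mul_zero]
      · simp
    have : b.repr x = 0 := Finsupp.ext fun j => hco j
    simpa using congrArg b.repr.symm this
  -- repr of A x and Astar x
  have hrv : ∀ i j : Fin (d+1), b.repr (v j) i = if i = j then 1 else 0 := by
    intro i j; rw [← hbv, b.repr_self, Finsupp.single_apply, eq_comm]
    simp [eq_comm]
  have hreprA : ∀ (i : Fin (d+1)) (x : V), b.repr (A x) i = ∑ j, a i j * b.repr x j := by
    intro i x
    conv_lhs => rw [← b.sum_repr x]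
    rw [map_sum, map_sum]
    simp only [map_smul, hbv, Finsupp.coe_finset_sum, Finset.sum_apply, Finsupp.coe_smul,
      Pi.smul_apply, smul_eq_mul]
    exact Finset.sum_congr rfl fun j _ => by rw [ha]; ring
  have hreprAs : ∀ (i : Fin (d+1)) (x : V), b.repr (Astar x) i = θstar i * b.repr x i := by
    intro i x
    rw [hAstar]
    simp only [LinearMap.sum_apply, LinearMap.smul_apply, map_sum, map_smul]
    simp only [Finsupp.coe_finset_sum, Finset.sum_apply, Finsupp.coe_smul, Pi.smul_apply,
      smul_eq_mul]
    rw [Finset.sum_eq_single i]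
    · rw [hEx i x, map_smul, Finsupp.smul_apply, hrv i i, if_pos rfl]
      simp [mul_comm]
    · intro h _ hh
      rw [hEx h x, map_smul, Finsupp.smul_apply, hrv i h, if_neg (Ne.symm hh)]
      simp
    · simp
  have hBA : ∀ x y, Bf (A x) y = Bf x (A y) := by
    intro x y
    rw [hBapp, hBapp]
    simp only [hreprA, Finset.mul_sum, Finset.sum_mul]
    rw [Finset.sum_comm]
    apply Finset.sum_congr rfl; intro i _
    apply Finset.sum_congr rfl; intro j _
    rw [show D j * (a j i * b.repr x i) * b.repr y j
        = (D j * a j i) * (b.repr x i * b.repr y j) by ring, hDaa j i]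
    ring
  have hBAs : ∀ x y, Bf (Astar x) y = Bf x (Astar y) := by
    intro x y
    rw [hBapp, hBapp]
    simp only [hreprAs]
    exact Finset.sum_congr rfl fun i _ => by ring
  -- lemmas about the primitive idempotents E
  have hAE : ∀ i, A * E i = θ i • E i := by
    intro i
    rw [hA, Finset.sum_mul, Finset.sum_eq_single i]
    · rw [smul_mul_assoc, hE, if_pos rfl]
    · intro k _ hk; rw [smul_mul_assoc, hE, if_neg hk, smul_zero]
    · simp
  have hAEx : ∀ (i : Fin (d+1)) (x : V), A (E i x) = θ i • E i x := by
    intro i x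
    have := congrArg (fun f : Module.End K V => f x) (hAE i)
    simpa [Module.End.mul_apply] using this
  have hBortho : ∀ (i j : Fin (d+1)) (x y : V), i ≠ j → Bf (E i x) (E j y) = 0 := by
    intro i j x y hij
    have h1 : θ i * Bf (E i x) (E j y) = θ j * Bf (E i x) (E j y) := by
      calc θ i * Bf (E i x) (E j y) = Bf (θ i • E i x) (E j y) := by
            rw [map_smul]; rfl
        _ = Bf (A (E i x)) (E j y) := by rw [hAEx]
        _ = Bf (E i x) (A (E j y)) := hBA _ _
        _ = Bf (E i x) (θ j • E j y) := by rw [hAEx]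
        _ = θ j * Bf (E i x) (E j y) := by rw [map_smul]; rfl
    have h2 : (θ i - θ j) * Bf (E i x) (E j y) = 0 := by rw [sub_mul, h1]; ring
    rcases mul_eq_zero.mp h2 with h | h
    · exact absurd h (sub_ne_zero.mpr fun hh => hij (hθ hh))
    · exact h
  have hsum1 : ∀ x : V, ∑ i, E i x = x := by
    intro x
    have := congrArg (fun f : Module.End K V => f x) hEsum
    simpa [LinearMap.sum_apply] using this
  have hBE : ∀ (i : Fin (d+1)) (x y : V), Bf (E i x) y = Bf x (E i y) := by
    intro i x y
    have h1 : Bf (E i x) y = Bf (E i x) (E i y) := by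
      conv_lhs => rw [← hsum1 y]
      rw [map_sum, Finset.sum_eq_single i]
      · intro j _ hj; exact hBortho i j x y (Ne.symm hj)
      · simp
    have h2 : Bf x (E i y) = Bf (E i x) (E i y) := by
      conv_lhs => rw [← hsum1 x]
      rw [map_sum, LinearMap.sum_apply, Finset.sum_eq_single i]
      · intro j _ hj; exact hBortho j i x y hj
      · simp
    rw [h1, h2]
  have hBmain : ∀ (i j : Fin (d+1)) (x y : V),
      Bf (E i (Astar (E j x))) y = Bf x (E j (Astar (E i y))) := by
    intro i j x y
    rw [hBE i, hBAs, hBE j]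
  have hswap : ∀ i j : Fin (d+1), E i * Astar * E j = 0 → E j * Astar * E i = 0 := by
    intro i j h
    ext y
    simp only [Module.End.mul_apply, LinearMap.zero_apply]
    apply hBnd
    intro x
    rw [hBsymm, ← hBmain i j x y]
    have := congrArg (fun f : Module.End K V => f x) h
    simp only [Module.End.mul_apply, LinearMap.zero_apply] at this
    rw [this, map_zero, LinearMap.zero_apply]
  -- membership criterion for U
  have hUfwd : ∀ (T : Finset (Fin (d+1))) (x : V),
      x ∈ (∑ h ∈ T, LinearMap.range (E h)) → ∀ j ∉ T, E j x = 0 := by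
    intro T
    induction T using Finset.induction_on with
    | empty =>
      intro x hx j _
      rw [Finset.sum_empty, Submodule.zero_eq_bot, Submodule.mem_bot] at hx
      rw [hx, map_zero]
    | @insert c T' hc ih =>
      intro x hx j hj
      rw [Finset.sum_insert hc, Submodule.add_eq_sup, Submodule.mem_sup] at hx
      obtain ⟨y, hy, z, hz, rfl⟩ := hx
      obtain ⟨w, rfl⟩ := hy
      have hjc : j ≠ c := fun h => hj (h ▸ Finset.mem_insert_self c T')
      have h1 : E j (E c w) = 0 := by
        have := congrArg (fun f : Module.End K V => f w) (hE j c)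
        simpa [Module.End.mul_apply, if_neg hjc] using this
      rw [map_add, h1, zero_add]
      exact ih z hz j (fun h => hj (Finset.mem_insert_of_mem h))
  have hUmem : ∀ x : V, x ∈ U ↔ ∀ j ∉ S, E j x = 0 := by
    intro x
    constructor
    · rw [hU]; exact hUfwd S x
    · intro h
      have hx : x = ∑ i ∈ S, E i x := by
        conv_lhs => rw [← hsum1 x]
        exact (Finset.sum_subset (Finset.subset_univ S) (fun i _ hi => h i hi)).symm
      rw [hx, hU]
      apply Submodule.sum_mem
      intro i hi
      have hle : LinearMap.range (E i) ≤ ∑ h ∈ S, LinearMap.range (E h) :=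
        Finset.single_le_sum (f := fun h => LinearMap.range (E h)) (fun _ _ => bot_le) hi
      exact hle ⟨x, rfl⟩
  -- conclusion
  constructor
  · intro hinv i hi j hj
    rintro ⟨hne, hM⟩
    apply hM
    apply hswap j i
    ext x
    simp only [Module.End.mul_apply, LinearMap.zero_apply]
    have h1 : E i x ∈ U := by
      rw [hU]
      exact (Finset.single_le_sum (f := fun h => LinearMap.range (E h))
        (fun _ _ => bot_le) hi) ⟨x, rfl⟩
    exact (hUmem _).mp (hinv _ h1) j hj
  · intro h x hx
    rw [hUmem] at hx ⊢
    intro j hj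
    have hexp : E j (Astar x) = ∑ i, E j (Astar (E i x)) := by
      conv_lhs => rw [← hsum1 x]
      rw [map_sum, map_sum]
    rw [hexp]
    apply Finset.sum_eq_zero
    intro i _
    by_cases hi : i ∈ S
    · have hne : i ≠ j := fun hij => hj (hij ▸ hi)
      have h0 : E i * Astar * E j = 0 := by
        by_contra h0
        exact h i hi j hj ⟨hne, h0⟩
      have h1 := hswap i j h0
      have := congrArg (fun f : Module.End K V => f x) h1
      simpa [Module.End.mul_apply] using this
    · rw [hx i hi, map_zero, map_zero]
end

section
/- Adopt the standing assumptions and suppose there exist β, γ* ∈ K such that θ*_{i−1} − β θ*_i + θ*_{i+1} = γ* for 1 ≤ i ≤ d−1. Then the expression θ*_{i−1}² − β θ*_{i−1} θ*_i + θ*_i² − γ*(θ*_{i−1} + θ*_i) is independent of i for 1 ≤ i ≤ d; and, denoting its common value by δ*, the following identity holds in End(V): 0 = [A*, A*²A − β A* A A* + A A*² − γ*(A A* + A* A) − δ* A], where [x, y] = xy − yx. -/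
/-- With the standing assumptions, suppose `θ*_{i−1} − β θ*_i + θ*_{i+1} = γ*` for
`1 ≤ i ≤ d−1`. Then `θ*_{i−1}² − β θ*_{i−1} θ*_i + θ*_i² − γ*(θ*_{i−1} + θ*_i)` is
independent of `i` for `1 ≤ i ≤ d`; denoting its common value by `δ*`, we have
`0 = [A*, A*²A − β A* A A* + A A*² − γ*(A A* + A* A) − δ* A]`. -/
theorem stmt_17 {K : Type*} [Field K] {d : ℕ} (hd : 1 ≤ d)
    {V : Type*} [AddCommGroup V] [Module K V] [FiniteDimensional K V]
    (hdim : Module.finrank K V = d + 1)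
    (Estar : Fin (d + 1) → Module.End K V)
    (hEstar : ∀ i j, Estar i * Estar j = if i = j then Estar i else 0)
    (hEstarRank : ∀ i, Module.finrank K (LinearMap.range (Estar i)) = 1)
    (A : Module.End K V)
    (htri : ∀ i j : Fin (d + 1), 1 < Nat.dist (i : ℕ) (j : ℕ) → Estar i * A * Estar j = 0)
    (hirr : ∀ i j : Fin (d + 1), Nat.dist (i : ℕ) (j : ℕ) = 1 → Estar i * A * Estar j ≠ 0)
    (θ : Fin (d + 1) → K) (hθ : Function.Injective θ)
    (E : Fin (d + 1) → Module.End K V)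
    (hE : ∀ i j, E i * E j = if i = j then E i else 0)
    (hEne : ∀ i, E i ≠ 0)
    (hEsum : ∑ i, E i = 1)
    (hA : A = ∑ i, θ i • E i)
    (θstar : Fin (d + 1) → K)
    (Astar : Module.End K V) (hAstar : Astar = ∑ i, θstar i • Estar i)
    (β γstar : K)
    (hrec : ∀ i : ℕ, ∀ _h1 : 1 ≤ i, ∀ _h2 : i ≤ d - 1,
      θstar ⟨i - 1, by omega⟩ - β * θstar ⟨i, by omega⟩ + θstar ⟨i + 1, by omega⟩ = γstar) :
    ∃ δstar : K,
      (∀ i : ℕ, ∀ _h1 : 1 ≤ i, ∀ _h2 : i ≤ d,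
        θstar ⟨i - 1, by omega⟩ ^ 2 - β * θstar ⟨i - 1, by omega⟩ * θstar ⟨i, by omega⟩ +
            θstar ⟨i, by omega⟩ ^ 2 -
            γstar * (θstar ⟨i - 1, by omega⟩ + θstar ⟨i, by omega⟩) = δstar) ∧
      0 = Astar * (Astar ^ 2 * A - β • (Astar * A * Astar) + A * Astar ^ 2 -
              γstar • (A * Astar + Astar * A) - δstar • A) -
            (Astar ^ 2 * A - β • (Astar * A * Astar) + A * Astar ^ 2 -
              γstar • (A * Astar + Astar * A) - δstar • A) * Astar := by
  classical
  set δ : K := θstar ⟨0, by omega⟩ ^ 2 - β * θstar ⟨0, by omega⟩ * θstar ⟨1, by omega⟩ +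
      θstar ⟨1, by omega⟩ ^ 2 -
      γstar * (θstar ⟨0, by omega⟩ + θstar ⟨1, by omega⟩) with hδdef
  -- Part 1: the expression is independent of i
  have hconst : ∀ i : ℕ, ∀ _h1 : 1 ≤ i, ∀ _h2 : i ≤ d,
      θstar ⟨i - 1, by omega⟩ ^ 2 - β * θstar ⟨i - 1, by omega⟩ * θstar ⟨i, by omega⟩ +
          θstar ⟨i, by omega⟩ ^ 2 -
          γstar * (θstar ⟨i - 1, by omega⟩ + θstar ⟨i, by omega⟩) = δ := by
    intro i
    induction i with
    | zero => intro h1 _; omega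
    | succ k ih =>
      intro _ h2
      rcases Nat.eq_zero_or_pos k with hk | hk
      · subst hk
        simp only [Nat.add_sub_cancel]
        rfl
      · have ihk := ih hk (by omega)
        have hr := hrec k hk (by omega)
        simp only [Nat.add_sub_cancel]
        linear_combination ihk +
          (θstar ⟨k + 1, by omega⟩ - θstar ⟨k - 1, by omega⟩) * hr
  refine ⟨δ, hconst, ?_⟩
  -- basic multiplication facts
  have hL : ∀ i, Estar i * Astar = θstar i • Estar i := by
    intro i
    rw [hAstar, Finset.mul_sum]
    simp only [mul_smul_comm, hEstar, smul_ite, smul_zero]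
    simp
  have hRr : ∀ i, Astar * Estar i = θstar i • Estar i := by
    intro i
    rw [hAstar, Finset.sum_mul]
    simp only [smul_mul_assoc, hEstar, smul_ite, smul_zero]
    simp
  have hR' : ∀ (T : Module.End K V) (j), T * Astar * Estar j = θstar j • (T * Estar j) := by
    intro T j
    rw [mul_assoc, hRr, mul_smul_comm]
  -- sum of the idempotents is 1
  have hPE : ∀ i, (∑ k, Estar k) * Estar i = Estar i := by
    intro i
    rw [Finset.sum_mul]
    simp [hEstar]
  have hPidem : (∑ k, Estar k) * (∑ k, Estar k) = ∑ k, Estar k := by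
    rw [Finset.mul_sum]
    exact Finset.sum_congr rfl fun i _ => hPE i
  have hne : ∀ i, Estar i ≠ 0 := by
    intro i h
    have := hEstarRank i
    rw [h, LinearMap.range_zero, finrank_bot] at this
    exact zero_ne_one this
  have hvex : ∀ i, ∃ v, Estar i v ≠ 0 := by
    intro i
    by_contra h
    push_neg at h
    exact hne i (LinearMap.ext fun v => by simpa using h v)
  choose v hv using hvex
  have hli : LinearIndependent K (fun i : Fin (d + 1) => Estar i (v i)) := by
    rw [Fintype.linearIndependent_iff]
    intro g hg j
    have h1 : Estar j (∑ i, g i • Estar i (v i)) = 0 := by rw [hg]; simp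
    rw [map_sum] at h1
    have h2 : ∀ i, Estar j (g i • Estar i (v i)) =
        g i • (if j = i then Estar j else 0) (v i) := by
      intro i
      rw [map_smul, ← hEstar j i]
      rfl
    simp only [h2] at h1
    rw [Finset.sum_eq_single j] at h1
    · simp only [if_pos rfl] at h1
      rcases smul_eq_zero.mp h1 with h | h
      · exact h
      · exact absurd h (hv j)
    · intro b _ hb
      simp [Ne.symm hb]
    · simp
  have htop : LinearMap.range (∑ k, Estar k) = ⊤ := by
    have hsub : Set.range (fun i : Fin (d + 1) => Estar i (v i)) ⊆
        LinearMap.range (∑ k, Estar k) := by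
      rintro x ⟨i, rfl⟩
      refine ⟨Estar i (v i), ?_⟩
      have : ((∑ k, Estar k) * Estar i) (v i) = Estar i (v i) := by rw [hPE]
      exact this
    have hspan := Submodule.span_le.mpr hsub
    have hcard : Module.finrank K (Submodule.span K
        (Set.range (fun i : Fin (d + 1) => Estar i (v i)))) = d + 1 := by
      rw [finrank_span_eq_card hli]
      simp
    have hge : d + 1 ≤ Module.finrank K (LinearMap.range (∑ k, Estar k)) :=
      le_of_eq_of_le hcard.symm (Submodule.finrank_mono hspan)
    apply Submodule.eq_top_of_finrank_eq
    have hle := Submodule.finrank_le (LinearMap.range (∑ k, Estar k))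
    omega
  have hP1 : (∑ k, Estar k) = (1 : Module.End K V) := by
    apply LinearMap.ext
    intro w
    obtain ⟨u, hu⟩ := LinearMap.range_eq_top.mp htop w
    have : (∑ k, Estar k) ((∑ k, Estar k) u) = ((∑ k, Estar k) * (∑ k, Estar k)) u := rfl
    rw [← hu, this, hPidem]
    rfl
  -- the big bracket
  set C : Module.End K V := Astar ^ 2 * A - β • (Astar * A * Astar) + A * Astar ^ 2 -
      γstar • (A * Astar + Astar * A) - δ • A with hCdef
  have hC : ∀ i j, Estar i * C * Estar j =
      (θstar i ^ 2 - β * (θstar i * θstar j) + θstar j ^ 2 -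
        γstar * (θstar j + θstar i) - δ) • (Estar i * A * Estar j) := by
    intro i j
    rw [hCdef]
    simp only [pow_two, mul_sub, sub_mul, mul_add, add_mul, smul_mul_assoc,
      mul_smul_comm, ← mul_assoc, hL, hR', smul_smul]
    match_scalars <;> ring
  have hD : ∀ i j, Estar i * (Astar * C - C * Astar) * Estar j = 0 := by
    intro i j
    have : Estar i * (Astar * C - C * Astar) * Estar j =
        ((θstar i - θstar j) * (θstar i ^ 2 - β * (θstar i * θstar j) + θstar j ^ 2 -
          γstar * (θstar j + θstar i) - δ)) • (Estar i * A * Estar j) := by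
      simp only [mul_sub, sub_mul, ← mul_assoc, hL, hR', smul_mul_assoc]
      rw [mul_assoc (Estar i) C, mul_assoc (Estar i) A]
      rw [show Estar i * (C * Estar j) = Estar i * C * Estar j from (mul_assoc _ _ _).symm,
        show Estar i * (A * Estar j) = Estar i * A * Estar j from (mul_assoc _ _ _).symm]
      rw [hC i j]
      match_scalars <;> ring
    rw [this]
    rcases eq_or_ne i j with hij | hij
    · subst hij; rw [sub_self, zero_mul, zero_smul]
    rcases Nat.lt_or_ge 1 (Nat.dist (i : ℕ) (j : ℕ)) with hgt | hle
    · rw [htri i j hgt, smul_zero]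
    have hdist : (i : ℕ) + 1 = (j : ℕ) ∨ (j : ℕ) + 1 = (i : ℕ) := by
      have hne' : (i : ℕ) ≠ (j : ℕ) := fun h => hij (Fin.ext h)
      simp only [Nat.dist] at hle
      omega
    have hzero : θstar i ^ 2 - β * (θstar i * θstar j) + θstar j ^ 2 -
        γstar * (θstar j + θstar i) - δ = 0 := by
      rcases hdist with h | h
      · have h1 : 1 ≤ (j : ℕ) := by omega
        have h2 : (j : ℕ) ≤ d := by omega
        have hc := hconst (j : ℕ) h1 h2
        rw [show θstar i = θstar ⟨(j : ℕ) - 1, by omega⟩ from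
          congrArg θstar (Fin.ext (by simp; omega))]
        linear_combination hc
      · have h1 : 1 ≤ (i : ℕ) := by omega
        have h2 : (i : ℕ) ≤ d := by omega
        have hc := hconst (i : ℕ) h1 h2
        rw [show θstar j = θstar ⟨(i : ℕ) - 1, by omega⟩ from
          congrArg θstar (Fin.ext (by simp; omega))]
        linear_combination hc
    rw [hzero, mul_zero, zero_smul]
  have hfin : (∑ i : Fin (d + 1), ∑ j : Fin (d + 1),
      Estar i * (Astar * C - C * Astar) * Estar j) = 0 :=
    Finset.sum_eq_zero fun i _ => Finset.sum_eq_zero fun j _ => hD i j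
  calc (0 : Module.End K V)
      = ∑ i : Fin (d + 1), ∑ j : Fin (d + 1),
          Estar i * (Astar * C - C * Astar) * Estar j := hfin.symm
    _ = (∑ i, Estar i) * (Astar * C - C * Astar) * (∑ j, Estar j) := by
        simp only [Finset.sum_mul, Finset.mul_sum]
        exact Finset.sum_comm
    _ = Astar * C - C * Astar := by rw [hP1, one_mul, mul_one]
end

section
/- Adopt the standing assumptions, let Δ be the associated graph, and suppose θ*_0 ≠ θ*_i for 1 ≤ i ≤ d. Then Δ is connected. -/
open Module LinearMap Submodule

section helpers
variable {K V : Type*} [Field K] [AddCommGroup V] [Module K V] [FiniteDimensional K V]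
  {n : ℕ} [NeZero n]

lemma aux_basis (hdim : Module.finrank K V = n) (P : Fin n → Module.End K V)
    (hP : ∀ i j, P i * P j = if i = j then P i else 0)
    (u : Fin n → V) (hu : ∀ k, P k (u k) = u k) (hne : ∀ k, u k ≠ 0) :
    ∃ b : Basis (Fin n) K V, ⇑b = u := by
  have horth : ∀ l k, l ≠ k → P l (u k) = 0 := by
    intro l k hlk
    have : P l (P k (u k)) = (P l * P k) (u k) := rfl
    rw [hu] at this
    rw [this, hP, if_neg hlk]; rfl
  have li : LinearIndependent K u := by
    rw [Fintype.linearIndependent_iff]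
    intro g hg l
    have h2 : P l (∑ i, g i • u i) = g l • u l := by
      rw [map_sum]
      rw [Finset.sum_eq_single l]
      · rw [map_smul, hu]
      · intro b _ hb; rw [map_smul, horth l b (Ne.symm hb), smul_zero]
      · simp
    rw [hg, map_zero] at h2
    rcases smul_eq_zero.mp h2.symm with h | h
    · exact h
    · exact absurd h (hne l)
  exact ⟨basisOfLinearIndependentOfCardEqFinrank li (by simp [hdim]),
    coe_basisOfLinearIndependentOfCardEqFinrank li _⟩

lemma aux_sum_one (hdim : Module.finrank K V = n) (P : Fin n → Module.End K V)
    (hP : ∀ i j, P i * P j = if i = j then P i else 0)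
    (u : Fin n → V) (hu : ∀ k, P k (u k) = u k) (hne : ∀ k, u k ≠ 0) :
    ∑ k, P k = 1 := by
  obtain ⟨b, hb⟩ := aux_basis hdim P hP u hu hne
  have horth : ∀ l k, l ≠ k → P l (u k) = 0 := by
    intro l k hlk
    have : P l (P k (u k)) = (P l * P k) (u k) := rfl
    rw [hu] at this
    rw [this, hP, if_neg hlk]; rfl
  apply b.ext
  intro k
  rw [hb]
  rw [LinearMap.sum_apply, Finset.sum_eq_single k (fun l _ hl => horth l k hl) (by simp), hu]
  rfl

lemma aux_rank_le_span {P : Module.End K V} {x : V}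
    (h1 : Module.finrank K (LinearMap.range P) = 1) (hx : x ∈ LinearMap.range P) (hxne : x ≠ 0) :
    LinearMap.range P ≤ Submodule.span K {x} := by
  have hle : Submodule.span K {x} ≤ LinearMap.range P := by
    rw [Submodule.span_singleton_le_iff_mem]; exact hx
  have := Submodule.eq_of_le_of_finrank_le hle (by rw [h1, finrank_span_singleton hxne])
  rw [this]

end helpers

section helpers2
variable {K V : Type*} [Field K] [AddCommGroup V] [Module K V]
  {n : ℕ}

lemma aux_AE (E : Fin n → Module.End K V) (θ : Fin n → K)
    (hE : ∀ i j, E i * E j = if i = j then E i else 0)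
    {A : Module.End K V} (hA : A = ∑ i, θ i • E i) (m : Fin n) :
    A * E m = θ m • E m := by
  rw [hA, Finset.sum_mul]
  rw [Finset.sum_eq_single m]
  · rw [smul_mul_assoc, hE, if_pos rfl]
  · intro b _ hb; rw [smul_mul_assoc, hE, if_neg hb, smul_zero]
  · simp

lemma aux_EA (E : Fin n → Module.End K V) (θ : Fin n → K)
    (hE : ∀ i j, E i * E j = if i = j then E i else 0)
    {A : Module.End K V} (hA : A = ∑ i, θ i • E i) (m : Fin n) :
    E m * A = θ m • E m := by
  rw [hA, Finset.mul_sum]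
  rw [Finset.sum_eq_single m]
  · rw [mul_smul_comm, hE, if_pos rfl]
  · intro b _ hb; rw [mul_smul_comm, hE, if_neg (Ne.symm hb), smul_zero]
  · simp

lemma aux_pow (E : Fin n → Module.End K V) (θ : Fin n → K)
    (hE : ∀ i j, E i * E j = if i = j then E i else 0)
    (hEsum : ∑ i, E i = 1)
    {A : Module.End K V} (hA : A = ∑ i, θ i • E i) (p : ℕ) :
    A ^ p = ∑ m, (θ m ^ p) • E m := by
  induction p with
  | zero => simp [hEsum.symm]
  | succ p ih =>
    rw [pow_succ', ih, Finset.mul_sum]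
    apply Finset.sum_congr rfl
    intro m _
    rw [mul_smul_comm, aux_AE E θ hE hA m, smul_smul, pow_succ, mul_comm]

lemma aux_inv (E : Fin n → Module.End K V) (θ : Fin n → K)
    (hE : ∀ i j, E i * E j = if i = j then E i else 0)
    (hEsum : ∑ i, E i = 1)
    {A : Module.End K V} (hA : A = ∑ i, θ i • E i)
    (W : Submodule K V) (hW : ∀ w ∈ W, A w ∈ W) (s : Finset (Fin n)) :
    ∀ w ∈ W, (∑ m, (∏ l ∈ s, (θ m - θ l)) • E m) w ∈ W := by
  induction s using Finset.induction_on with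
  | empty =>
    intro w hw
    simpa [hEsum] using hw
  | @insert a s ha ih =>
    intro w hw
    have key : (∑ m, (∏ l ∈ insert a s, (θ m - θ l)) • E m) w
        = (A - θ a • 1) ((∑ m, (∏ l ∈ s, (θ m - θ l)) • E m) w) := by
      have : (A - θ a • 1) * (∑ m, (∏ l ∈ s, (θ m - θ l)) • E m)
          = ∑ m, (∏ l ∈ insert a s, (θ m - θ l)) • E m := by
        rw [Finset.mul_sum]
        apply Finset.sum_congr rfl
        intro m _
        rw [mul_smul_comm, sub_mul, smul_mul_assoc, one_mul, aux_AE E θ hE hA m, ← sub_smul,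
          smul_smul, Finset.prod_insert ha, mul_comm]
      rw [← this]; rfl
    rw [key]
    have h2 := ih w hw
    have h3 : A ((∑ m, (∏ l ∈ s, (θ m - θ l)) • E m) w) ∈ W := hW _ h2
    rw [LinearMap.sub_apply]
    exact W.sub_mem h3 (by rw [LinearMap.smul_apply, Module.End.one_apply]; exact W.smul_mem _ h2)

lemma aux_Ek_inv (E : Fin n → Module.End K V) (θ : Fin n → K)
    (hE : ∀ i j, E i * E j = if i = j then E i else 0)
    (hEsum : ∑ i, E i = 1)
    {A : Module.End K V} (hA : A = ∑ i, θ i • E i)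
    (k : Fin n) (hk : ∀ l, l ≠ k → θ k ≠ θ l)
    (W : Submodule K V) (hW : ∀ w ∈ W, A w ∈ W) :
    ∀ w ∈ W, E k w ∈ W := by
  intro w hw
  set s : Finset (Fin n) := Finset.univ.erase k with hs
  set c : K := ∏ l ∈ s, (θ k - θ l) with hc
  have hcne : c ≠ 0 := by
    rw [hc]
    apply Finset.prod_ne_zero_iff.mpr
    intro l hl
    exact sub_ne_zero_of_ne (hk l (Finset.ne_of_mem_erase hl))
  have key : (∑ m, (∏ l ∈ s, (θ m - θ l)) • E m) = c • E k := by
    rw [Finset.sum_eq_single k (fun m _ hm => by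
      have : (∏ l ∈ s, (θ m - θ l)) = 0 :=
        Finset.prod_eq_zero (Finset.mem_erase.mpr ⟨hm, Finset.mem_univ m⟩) (sub_self (θ m))
      rw [this, zero_smul]) (by simp)]
  have h1 := aux_inv E θ hE hEsum hA W hW s w hw
  rw [key] at h1
  have : E k w = c⁻¹ • ((c • E k) w) := by
    rw [LinearMap.smul_apply, smul_smul, inv_mul_cancel₀ hcne, one_smul]
  rw [this]
  exact W.smul_mem _ h1

end helpers2

/-- With the standing assumptions, suppose `θ*_0 ≠ θ*_i` for `1 ≤ i ≤ d`. Then the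
graph `Δ` is connected: any two vertices are joined by a path, where distinct vertices
`a, b` are adjacent whenever `E_a A* E_b ≠ 0`. -/
theorem stmt_19 {K : Type*} [Field K] {d : ℕ} (hd : 1 ≤ d)
    {V : Type*} [AddCommGroup V] [Module K V] [FiniteDimensional K V]
    (hdim : Module.finrank K V = d + 1)
    (Estar : Fin (d + 1) → Module.End K V)
    (hEstar : ∀ i j, Estar i * Estar j = if i = j then Estar i else 0)
    (hEstarRank : ∀ i, Module.finrank K (LinearMap.range (Estar i)) = 1)
    (A : Module.End K V)
    (htri : ∀ i j : Fin (d + 1), 1 < Nat.dist (i : ℕ) (j : ℕ) → Estar i * A * Estar j = 0)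
    (hirr : ∀ i j : Fin (d + 1), Nat.dist (i : ℕ) (j : ℕ) = 1 → Estar i * A * Estar j ≠ 0)
    (θ : Fin (d + 1) → K) (hθ : Function.Injective θ)
    (E : Fin (d + 1) → Module.End K V)
    (hE : ∀ i j, E i * E j = if i = j then E i else 0)
    (hEne : ∀ i, E i ≠ 0)
    (hEsum : ∑ i, E i = 1)
    (hA : A = ∑ i, θ i • E i)
    (θstar : Fin (d + 1) → K)
    (Astar : Module.End K V) (hAstar : Astar = ∑ i, θstar i • Estar i)
    (hθ0 : ∀ i : Fin (d + 1), i ≠ 0 → θstar 0 ≠ θstar i) :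
    ∀ i j : Fin (d + 1),
      Relation.ReflTransGen (fun a b => a ≠ b ∧ E a * Astar * E b ≠ 0) i j := by
  classical
  -- sum of Estar is 1
  have hveq : ∀ k : Fin (d+1), ∃ y : V, Estar k y ≠ 0 := by
    intro k
    by_contra h
    push_neg at h
    have : Estar k = 0 := LinearMap.ext fun y => h y
    have h2 := hEstarRank k
    rw [this, LinearMap.range_zero] at h2
    simp [finrank_bot] at h2
  choose yv hyv using hveq
  have hEstarsum : ∑ k, Estar k = 1 := by
    apply aux_sum_one hdim Estar hEstar (fun k => Estar k (yv k))
    · intro k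
      have : Estar k (Estar k (yv k)) = (Estar k * Estar k) (yv k) := rfl
      rw [this, hEstar, if_pos rfl]
    · exact hyv
  -- decomposition of Estar m (A y)
  have hdec : ∀ (m : Fin (d+1)) (y : V), Estar m (A y) = ∑ l, Estar m (A (Estar l y)) := by
    intro m y
    conv_lhs => rw [show y = ∑ l, Estar l y from by
      rw [← LinearMap.sum_apply, hEstarsum, Module.End.one_apply]]
    rw [map_sum, map_sum]
  have hterm0 : ∀ (m l : Fin (d+1)) (y : V), 1 < Nat.dist (m:ℕ) (l:ℕ) →
      Estar m (A (Estar l y)) = 0 := by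
    intro m l y h
    have h2 : Estar m (A (Estar l y)) = (Estar m * A * Estar l) y := by
      simp [Module.End.mul_apply]
    rw [h2, htri m l h]; rfl
  -- step lemma
  have hstep : ∀ (a b : Fin (d+1)), Estar b * A * Estar a ≠ 0 → ∀ x : V,
      Estar a x = x → x ≠ 0 → Estar b (A x) ≠ 0 := by
    intro a b hab x hx hxne
    have hv : ∃ v, Estar b (A (Estar a v)) ≠ 0 := by
      by_contra h
      push_neg at h
      exact hab (LinearMap.ext fun v => by simpa [Module.End.mul_apply] using h v)
    obtain ⟨v, hv⟩ := hv
    have hmem : Estar a v ∈ Submodule.span K {x} :=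
      aux_rank_le_span (hEstarRank a) ⟨x, hx⟩ hxne ⟨v, rfl⟩
    obtain ⟨c, hc⟩ := Submodule.mem_span_singleton.mp hmem
    intro h0
    apply hv
    rw [← hc, map_smul, map_smul, h0, smul_zero]
  -- vanishing lemma
  have zlem : ∀ p : ℕ, ∀ m : Fin (d+1), p < (m:ℕ) → ∀ x : V, Estar 0 x = x →
      Estar m ((A ^ p) x) = 0 := by
    intro p
    induction p with
    | zero =>
      intro m hm x hx
      have hm0 : m ≠ 0 := by
        intro h; rw [h] at hm; simp at hm
      rw [pow_zero, Module.End.one_apply, ← hx]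
      have : Estar m (Estar 0 x) = (Estar m * Estar 0) x := rfl
      rw [this, hEstar, if_neg hm0]; rfl
    | succ p ih =>
      intro m hm x hx
      rw [pow_succ', Module.End.mul_apply, hdec]
      apply Finset.sum_eq_zero
      intro l _
      by_cases hdist : 1 < Nat.dist (m:ℕ) (l:ℕ)
      · exact hterm0 m l _ hdist
      · have hl : p < (l:ℕ) := by simp [Nat.dist] at hdist ⊢; omega
        rw [ih l hl x hx, map_zero, map_zero]
  -- nonvanishing lemma
  have nzlem : ∀ p : ℕ, ∀ hp : p < d + 1, ∀ x : V, Estar 0 x = x → x ≠ 0 →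
      Estar ⟨p, hp⟩ ((A ^ p) x) ≠ 0 := by
    intro p
    induction p with
    | zero =>
      intro hp x hx hxne
      have h0 : (⟨0, hp⟩ : Fin (d+1)) = 0 := rfl
      rw [h0, pow_zero, Module.End.one_apply, hx]
      exact hxne
    | succ p ih =>
      intro hp x hx hxne
      have hp' : p < d + 1 := by omega
      set m : Fin (d+1) := ⟨p+1, hp⟩ with hmdef
      set l0 : Fin (d+1) := ⟨p, hp'⟩ with hl0def
      rw [pow_succ', Module.End.mul_apply, hdec]
      rw [Finset.sum_eq_single l0 (fun l _ hl => by
        by_cases hdist : 1 < Nat.dist (m:ℕ) (l:ℕ)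
        · exact hterm0 m l _ hdist
        · have hlp : p < (l:ℕ) := by
            have hne : (l:ℕ) ≠ p := fun h => hl (Fin.ext h)
            simp [Nat.dist, hmdef] at hdist
            omega
          rw [zlem p l hlp x hx, map_zero, map_zero]) (by simp)]
      have hx' : Estar l0 (Estar l0 ((A^p) x)) = Estar l0 ((A^p) x) := by
        have : Estar l0 (Estar l0 ((A^p) x)) = (Estar l0 * Estar l0) ((A^p) x) := rfl
        rw [this, hEstar, if_pos rfl]
      have hx'ne : Estar l0 ((A^p) x) ≠ 0 := ih hp' x hx hxne
      have hdist1 : Nat.dist (m:ℕ) (l0:ℕ) = 1 := by simp [Nat.dist, hmdef, hl0def]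
      exact hstep l0 m (hirr m l0 hdist1) _ hx' hx'ne
  -- cyclic vector lemma
  have cyc : ∀ x : V, Estar 0 x = x → x ≠ 0 →
      (⊤ : Submodule K V) ≤ Submodule.span K (Set.range fun k => E k x) := by
    intro x hx hxne
    set g : Fin (d+1) → V := fun p => (A ^ (p:ℕ)) x with hg
    have li : LinearIndependent K g := by
      rw [Fintype.linearIndependent_iff]
      intro c hc
      by_contra hcon
      push_neg at hcon
      obtain ⟨i0, hi0⟩ := hcon
      set T : Finset (Fin (d+1)) := Finset.univ.filter (fun i => c i ≠ 0) with hT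
      have hTne : T.Nonempty := ⟨i0, by simp [hT, hi0]⟩
      set m : Fin (d+1) := T.max' hTne with hm
      have hmT : m ∈ T := T.max'_mem hTne
      have hcm : c m ≠ 0 := by simpa [hT] using hmT
      have h0 : Estar m (∑ p, c p • g p) = 0 := by rw [hc, map_zero]
      rw [map_sum] at h0
      rw [Finset.sum_eq_single m (fun p _ hp => by
        rcases lt_or_gt_of_ne (fun h : (p:ℕ) = (m:ℕ) => hp (Fin.ext h)) with hlt | hgt
        · rw [map_smul, zlem (p:ℕ) m hlt x hx, smul_zero]
        · have : c p = 0 := by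
            by_contra hcp
            have : p ∈ T := by simp [hT, hcp]
            have := T.le_max' p this
            rw [← hm] at this
            omega
          rw [this, zero_smul, map_zero]) (by simp)] at h0
      rw [map_smul] at h0
      have hnz : Estar m ((A ^ (m:ℕ)) x) ≠ 0 := by
        have := nzlem (m:ℕ) m.isLt x hx hxne
        simpa using this
      rcases smul_eq_zero.mp h0 with h | h
      · exact hcm h
      · exact hnz h
    have hcard : Fintype.card (Fin (d+1)) = Module.finrank K V := by simp [hdim]
    have hspan : Submodule.span K (Set.range g) = ⊤ := by
      rw [← coe_basisOfLinearIndependentOfCardEqFinrank li hcard]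
      exact Basis.span_eq _
    have hsub : Submodule.span K (Set.range g) ≤
        Submodule.span K (Set.range fun k => E k x) := by
      rw [Submodule.span_le]
      rintro _ ⟨p, rfl⟩
      have hgp : g p = ∑ k, θ k ^ (p:ℕ) • E k x := by
        rw [hg]
        simp only
        rw [aux_pow E θ hE hEsum hA (p:ℕ), LinearMap.sum_apply]
        apply Finset.sum_congr rfl
        intro k _
        rw [LinearMap.smul_apply]
      rw [hgp]
      apply Submodule.sum_mem
      intro k _
      exact Submodule.smul_mem _ _ (Submodule.subset_span ⟨k, rfl⟩)
    rw [← hspan]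
    exact hsub
  -- irreducibility
  have hirred : ∀ W : Submodule K V, W ≠ ⊥ → (∀ w ∈ W, A w ∈ W) →
      (∀ w ∈ W, Astar w ∈ W) → W = ⊤ := by
    intro W hWne hWA hWAstar
    have hE0inv : ∀ w ∈ W, Estar 0 w ∈ W := by
      apply aux_Ek_inv Estar θstar hEstar hEstarsum hAstar 0
        (fun l hl => hθ0 l hl) W hWAstar
    have hEkinv : ∀ k : Fin (d+1), ∀ w ∈ W, E k w ∈ W := by
      intro k
      exact aux_Ek_inv E θ hE hEsum hA k
        (fun l hl h => hl (hθ h.symm)) W hWA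
    -- minimal support
    have hQex' : ∃ p : ℕ, ∃ hp : p < d + 1, ∃ w ∈ W, Estar ⟨p, hp⟩ w ≠ 0 := by
      obtain ⟨w, hwW, hwne⟩ := Submodule.exists_mem_ne_zero_of_ne_bot hWne
      by_contra h
      apply hwne
      have : w = ∑ l, Estar l w := by
        rw [← LinearMap.sum_apply, hEstarsum, Module.End.one_apply]
      rw [this]
      apply Finset.sum_eq_zero
      intro l _
      by_contra hne2
      exact h ⟨(l:ℕ), l.isLt, w, hwW, by simpa using hne2⟩
    set N := Nat.find hQex' with hN
    obtain ⟨hNd, w, hwW, hwne⟩ := Nat.find_spec hQex'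
    have hNzero : N = 0 := by
      by_contra hN0
      have hN1 : N - 1 < N := by omega
      apply Nat.find_min hQex' hN1
      refine ⟨by omega, A w, hWA w hwW, ?_⟩
      set m : Fin (d+1) := ⟨N - 1, by omega⟩ with hmdef
      set l0 : Fin (d+1) := ⟨N, hNd⟩ with hl0def
      have hkey : Estar m (A w) = Estar m (A (Estar l0 w)) := by
        rw [hdec]
        rw [Finset.sum_eq_single l0 (fun l _ hl => by
          by_cases hdist : 1 < Nat.dist (m:ℕ) (l:ℕ)
          · exact hterm0 m l _ hdist
          · have hlN : (l:ℕ) < N := by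
              have hne : (l:ℕ) ≠ N := fun h => hl (Fin.ext h)
              simp [Nat.dist, hmdef] at hdist
              omega
            have hlz : Estar l w = 0 := by
              have h2 : ¬ ∃ hp : (l:ℕ) < d + 1, ∃ w ∈ W, Estar ⟨(l:ℕ), hp⟩ w ≠ 0 :=
                Nat.find_min hQex' hlN
              push_neg at h2
              have := h2 l.isLt w hwW
              simpa using this
            rw [hlz, map_zero, map_zero]) (by simp)]
      rw [hkey]
      have hfix : Estar l0 (Estar l0 w) = Estar l0 w := by
        have : Estar l0 (Estar l0 w) = (Estar l0 * Estar l0) w := rfl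
        rw [this, hEstar, if_pos rfl]
      have hdist1 : Nat.dist (m:ℕ) (l0:ℕ) = 1 := by
        simp [Nat.dist, hmdef, hl0def]; omega
      exact hstep l0 m (hirr m l0 hdist1) _ hfix hwne
    -- now N = 0 gives w with Estar 0 w ≠ 0
    have h0w : Estar 0 w ≠ 0 := by
      have : (⟨N, hNd⟩ : Fin (d+1)) = 0 := by
        apply Fin.ext; simp [hNzero]
      rwa [this] at hwne
    set v0 : V := Estar 0 w with hv0
    have hv0W : v0 ∈ W := hE0inv w hwW
    have hv0fix : Estar 0 v0 = v0 := by
      rw [hv0]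
      have : Estar 0 (Estar 0 w) = (Estar 0 * Estar 0) w := rfl
      rw [this, hEstar, if_pos rfl]
    have htop := cyc v0 hv0fix h0w
    rw [eq_top_iff]
    refine le_trans htop ?_
    rw [Submodule.span_le]
    rintro _ ⟨k, rfl⟩
    exact hEkinv k v0 hv0W
  -- main argument
  intro i j
  set rel : Fin (d+1) → Fin (d+1) → Prop := fun a b => a ≠ b ∧ E a * Astar * E b ≠ 0 with hrel
  by_contra hcon
  set S : Fin (d+1) → Prop := fun k => Relation.ReflTransGen rel i k with hS
  set Sfin : Finset (Fin (d+1)) := Finset.univ.filter S with hSfin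
  set F : Module.End K V := ∑ k ∈ Sfin, E k with hF
  set G : Module.End K V := ∑ k ∈ Finset.univ.filter (fun k => ¬ S k), E k with hG
  have hFG : F + G = 1 := by
    rw [hF, hG, Finset.sum_filter_add_sum_filter_not, hEsum]
  -- ker F is A-invariant
  have hFA : F * A = A * F := by
    rw [hF, Finset.sum_mul, Finset.mul_sum]
    apply Finset.sum_congr rfl
    intro k _
    rw [aux_EA E θ hE hA, aux_AE E θ hE hA]
  have hkerA : ∀ w ∈ LinearMap.ker F, A w ∈ LinearMap.ker F := by
    intro w hw
    rw [LinearMap.mem_ker] at hw ⊢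
    have : F (A w) = (F * A) w := rfl
    rw [this, hFA]
    have : (A * F) w = A (F w) := rfl
    rw [this, hw, map_zero]
  -- ker F is Astar-invariant
  have hFAstarG : F * Astar * G = 0 := by
    rw [hF, hG, Finset.sum_mul, Finset.sum_mul]
    apply Finset.sum_eq_zero
    intro k hk
    rw [Finset.mul_sum]
    apply Finset.sum_eq_zero
    intro l hl
    have hkS : S k := (Finset.mem_filter.mp hk).2
    have hlS : ¬ S l := (Finset.mem_filter.mp hl).2
    by_contra hne
    apply hlS
    have hkl : k ≠ l := fun h => hlS (h ▸ hkS)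
    exact Relation.ReflTransGen.tail hkS ⟨hkl, hne⟩
  have hkerAstar : ∀ w ∈ LinearMap.ker F, Astar w ∈ LinearMap.ker F := by
    intro w hw
    rw [LinearMap.mem_ker] at hw ⊢
    have hwG : G w = w := by
      have : F w + G w = w := by
        have := congrArg (fun f : Module.End K V => f w) hFG
        simpa using this
      rw [hw] at this
      simpa using this
    calc F (Astar w) = F (Astar (G w)) := by rw [hwG]
    _ = (F * Astar * G) w := rfl
    _ = 0 := by rw [hFAstarG]; rfl
  -- i ∈ S
  have hiS : S i := Relation.ReflTransGen.refl
  have hiSfin : i ∈ Sfin := by simp [hSfin, hiS]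
  have hFEi : F * E i = E i := by
    rw [hF, Finset.sum_mul]
    rw [Finset.sum_eq_single i (fun k _ hk => by rw [hE, if_neg hk]) (fun h => absurd hiSfin h)]
    rw [hE, if_pos rfl]
  -- ker F = ⊥
  have hkerbot : LinearMap.ker F = ⊥ := by
    by_contra h
    have := hirred (LinearMap.ker F) h hkerA hkerAstar
    rw [LinearMap.ker_eq_top] at this
    apply hEne i
    rw [← hFEi, this, zero_mul]
  -- F is the identity
  have hFF : F * F = F := by
    rw [hF, Finset.sum_mul]
    apply Finset.sum_congr rfl
    intro k hk
    rw [Finset.mul_sum]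
    rw [Finset.sum_eq_single k (fun l _ hl => by rw [hE, if_neg (Ne.symm hl)])
      (fun h => absurd hk h)]
    rw [hE, if_pos rfl]
  have hFone : ∀ v : V, F v = v := by
    intro v
    have h1 : F (F v - v) = 0 := by
      rw [map_sub]
      have : F (F v) = (F * F) v := rfl
      rw [this, hFF, sub_self]
    have : F v - v ∈ LinearMap.ker F := h1
    rw [hkerbot, Submodule.mem_bot] at this
    exact sub_eq_zero.mp this
  -- j ∉ S leads to contradiction
  have hjS : ¬ S j := hcon
  have hFEj : F * E j = 0 := by
    rw [hF, Finset.sum_mul]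
    apply Finset.sum_eq_zero
    intro k hk
    have hkS : S k := (Finset.mem_filter.mp hk).2
    have : k ≠ j := fun h => hjS (h ▸ hkS)
    rw [hE, if_neg this]
  apply hEne j
  apply LinearMap.ext
  intro v
  have h1 : F (E j v) = E j v := hFone (E j v)
  have h2 : F (E j v) = (F * E j) v := rfl
  rw [h2, hFEj] at h1
  exact h1.symm
end
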